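/- arXiv:1708.00704 — 3 statements merged into one kernel-verified Lean document; each statement's English description precedes it below -/
import Mathlib

section
/- Let G be a graph on c vertices with minimum degree at least 2 that is (c+1)-closed and non-Hamiltonian-connected, and suppose e(G) > h(c+1, ⌊c/2⌋ - p) for some integer p ≥ 0, where h(n,k) = C(n-k,2) + k(k-1). Then either (i) G contains a set S of s-1 vertices of degree at most s, for some 2 ≤ s ≤ ⌊c/2⌋ - p - 1, such that G - S is a clique; or (ii) G contains a set of t-1 vertices of degree at most t for some ⌊c/2⌋ - p + 1 ≤ t ≤ ⌊c/2⌋. -/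
open SimpleGraph

/-- Degree of a vertex, as the cardinality of its neighbour set. -/
noncomputable def degN {V : Type*} (G : SimpleGraph V) (u : V) : ℕ := (G.neighborSet u).ncard

/-- A graph is Hamiltonian-connected if every two distinct vertices are joined by a
Hamiltonian path (a path visiting every vertex exactly once). -/
def HamConn {V : Type*} [DecidableEq V] (G : SimpleGraph V) : Prop :=
  ∀ x y : V, x ≠ y → ∃ p : G.Walk x y, p.IsHamiltonian

/-- `h(n,k) = C(n-k,2) + k(k-1)`. -/
def hN (n k : ℕ) : ℕ := (n - k).choose 2 + k * (k - 1)

open Finset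

lemma two_mul_choose_two (n : ℕ) : 2 * n.choose 2 = n * (n - 1) := by
  induction n with
  | zero => rfl
  | succ n ih =>
    rw [Nat.choose_succ_succ, Nat.mul_add, ih, Nat.choose_one_right]
    cases n with
    | zero => rfl
    | succ m => simp [Nat.succ_sub_one]; ring

lemma sum_deg_le {V : Type*} [Fintype V] [DecidableEq V] (H : SimpleGraph V)
    [DecidableRel H.Adj] (A : Finset V) :
    ∑ v ∈ A, H.degree v ≤ H.edgeFinset.card + A.card.choose 2 := by
  classical
  have key : ∑ v ∈ A, H.degree v ≤ (A.biUnion (fun v => H.incidenceFinset v)).card + A.card.choose 2 := by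
    induction A using Finset.induction_on with
    | empty => simp
    | @insert a A ha ih =>
      have hsplit : ((insert a A).biUnion (fun v => H.incidenceFinset v)).card
          + (H.incidenceFinset a ∩ A.biUnion (fun v => H.incidenceFinset v)).card
          = (H.incidenceFinset a).card + (A.biUnion (fun v => H.incidenceFinset v)).card := by
        rw [Finset.biUnion_insert]
        exact Finset.card_union_add_card_inter _ _
      have hinter : (H.incidenceFinset a ∩ A.biUnion (fun v => H.incidenceFinset v)).card ≤ A.card := by
        rw [Finset.inter_biUnion]
        refine (Finset.card_biUnion_le).trans ?_
        refine (Finset.sum_le_card_nsmul A _ 1 ?_).trans (by simp)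
        intro v hv
        have hav : a ≠ v := fun h => ha (h ▸ hv)
        have : H.incidenceFinset a ∩ H.incidenceFinset v ⊆ {s(a, v)} := by
          intro e he
          simp only [Finset.mem_inter, mem_incidenceFinset] at he
          obtain ⟨⟨_, he1⟩, ⟨_, he2⟩⟩ := he
          simpa using (Sym2.mem_and_mem_iff hav).1 ⟨he1, he2⟩
        simpa using (Finset.card_le_card this).trans (by simp)
      have hdeg : (H.incidenceFinset a).card = H.degree a :=
        H.card_incidenceFinset_eq_degree a
      rw [Finset.sum_insert ha, Finset.card_insert_of_notMem ha,
        Nat.choose_succ_succ, Nat.choose_one_right]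
      have hrfl : (#A).choose (Nat.succ 1) = (#A).choose 2 := rfl
      omega
  refine key.trans (Nat.add_le_add_right (Finset.card_le_card ?_) _)
  intro e he
  simp only [Finset.mem_biUnion, mem_incidenceFinset] at he
  obtain ⟨v, _, hv⟩ := he
  exact SimpleGraph.mem_edgeFinset.2 (H.incidenceSet_subset v hv)

lemma walk_of_chain {V : Type*} (G : SimpleGraph V)
    (hG : ∀ u v : V, u ≠ v → G.Adj u v) (y : V) :
    ∀ (l : List V) (x : V), (x :: (l ++ [y])).Nodup →
      ∃ p : G.Walk x y, p.support = x :: (l ++ [y]) := by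
  intro l
  induction l with
  | nil =>
    intro x hn
    have hxy : x ≠ y := by simp at hn; tauto
    exact ⟨Walk.cons (hG x y hxy) Walk.nil, by simp⟩
  | cons a l ih =>
    intro x hn
    have hxa : x ≠ a := by
      have := hn.notMem
      simp at this; tauto
    obtain ⟨p, hp⟩ := ih a (by simpa using hn.of_cons)
    exact ⟨Walk.cons (hG x a hxa) p, by simp [hp]⟩

lemma complete_hamConn {V : Type*} [Fintype V] [DecidableEq V] (G : SimpleGraph V)
    (hG : ∀ u v : V, u ≠ v → G.Adj u v) : HamConn G := by
  intro x y hxy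
  set l : List V := ((Finset.univ.erase x).erase y).toList with hl
  have hnodup : l.Nodup := Finset.nodup_toList _
  have hmem : ∀ v : V, v ∈ l ↔ v ≠ y ∧ v ≠ x := by
    intro v
    simp [hl, Finset.mem_toList]
  have hxl : x ∉ l := fun h => ((hmem x).1 h).2 rfl
  have hyl : y ∉ l := fun h => ((hmem y).1 h).1 rfl
  have hn : (x :: (l ++ [y])).Nodup := by
    simp only [List.nodup_cons, List.nodup_append, List.mem_append]
    refine ⟨?_, hnodup, by simp, ?_⟩
    · rintro (h | h)
      · exact hxl h
      · simp at h; exact hxy h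
    · intro a ha; simp only [List.mem_singleton]
      rintro _ rfl rfl; exact hyl ha
  obtain ⟨p, hp⟩ := walk_of_chain G hG y l x hn
  refine ⟨p, ?_⟩
  intro v
  rw [hp]
  refine List.count_eq_one_of_mem (by rw [← hp]; exact hp ▸ hn) ?_
  by_cases hvx : v = x
  · simp [hvx]
  by_cases hvy : v = y
  · simp [hvy]
  · simp only [List.mem_cons, List.mem_append, List.mem_singleton]
    exact Or.inr (Or.inl ((hmem v).2 ⟨hvy, hvx⟩))

lemma arith1 (c m γ E : ℤ) (hm1 : 2*m ≤ c) (hm2 : c ≤ 2*m+1)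
    (key : (c-m)*(c-1-m) ≤ γ*(c-1-m)) (h1 : γ*(c-1-m) ≤ 2*E) :
    (m-1)*(2*c-3*m) ≤ 2*E := by nlinarith [sq_nonneg (c-2*m)]

lemma arith2 (c m γ E : ℤ) (hm1 : 2*m ≤ c) (hm2 : c ≤ 2*m+1) (hγm : m ≤ γ)
    (hγj : γ + 1 ≤ c - m) (h2 : 2*(γ*(c-1-m)) ≤ 2*E + γ*(γ-1)) :
    (m-1)*(2*c-3*m) ≤ 2*E := by
  nlinarith [mul_nonneg (by linarith : (0:ℤ) ≤ γ - m) (by linarith : (0:ℤ) ≤ 2*(c-1-m) + 1 - m - γ)]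

lemma arith3 (c K τ E : ℤ) (hτ : τ = K-1) (hKc : 3*K ≤ 2*c)
    (h1 : 2*(τ*(c-2-τ)) ≤ 2*E + τ*(τ-1)) :
    (K-1)*(2*c-3*K) ≤ 2*E := by
  subst hτ
  have hid : (K-1)*(2*c-3*K) = 2*((K-1)*(c-2-(K-1))) - (K-1)*((K-1)-1) := by ring
  linarith

lemma arith4 (c K eG E : ℤ) (hsum : 2*eG + 2*E = c*(c-1))
    (hge : (c+1-K)*(c-K) + 2*(K*(K-1)) + 2 ≤ 2*eG)
    (hEc : (K-1)*(2*c-3*K) ≤ 2*E) : False := by nlinarith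

/-- Structure of `(c+1)`-closed non-Hamiltonian-connected graphs on `c` vertices with
minimum degree at least 2 and more than `h(c+1, ⌊c/2⌋-p)` edges. -/
theorem stmt6 {V : Type*} [Fintype V] [DecidableEq V] (G : SimpleGraph V) (c p : ℕ)
    (hc : Fintype.card V = c) (hmin : ∀ v : V, 2 ≤ degN G v)
    (hclosed : ∀ u v : V, u ≠ v → ¬ G.Adj u v → degN G u + degN G v ≤ c)
    (hnc : ¬ HamConn G)
    (he : G.edgeSet.ncard > hN (c + 1) (c / 2 - p)) :
    (∃ s : ℕ, 2 ≤ s ∧ s ≤ c / 2 - p - 1 ∧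
      ∃ S : Finset V, S.card = s - 1 ∧ (∀ v ∈ S, degN G v ≤ s) ∧
        G.IsClique ((S : Set V)ᶜ)) ∨
    (∃ t : ℕ, c / 2 - p + 1 ≤ t ∧ t ≤ c / 2 ∧
      ∃ T : Finset V, T.card = t - 1 ∧ ∀ v ∈ T, degN G v ≤ t) := by
  classical
  letI : DecidableRel G.Adj := Classical.decRel _
  set K := c / 2 - p with hKdef
  have hdeg : ∀ v : V, degN G v = G.degree v := by
    intro v
    rw [degN, Set.ncard_eq_toFinset_card']
    rfl
  have hcompl : ∀ v : V, Gᶜ.degree v = c - 1 - G.degree v := by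
    intro v
    rw [SimpleGraph.degree_compl, hc]
  have hdegle : ∀ v : V, G.degree v ≤ c - 1 := by
    intro v
    have := G.degree_lt_card_verts v
    omega
  -- edge counts
  have hEq : G.edgeSet.ncard = G.edgeFinset.card := by
    rw [Set.ncard_eq_toFinset_card']
    congr 1
  have heG : hN (c + 1) K < G.edgeFinset.card := by rw [← hEq]; exact he
  have hsumE : G.edgeFinset.card + Gᶜ.edgeFinset.card = c.choose 2 := by
    have hdisj : Disjoint G.edgeFinset Gᶜ.edgeFinset := by
      rw [← Finset.disjoint_coe]
      simp only [Set.coe_toFinset, SimpleGraph.coe_edgeFinset]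
      rw [SimpleGraph.disjoint_edgeSet]
      exact disjoint_compl_right
    rw [← Finset.card_union_of_disjoint hdisj]
    have hu : G.edgeFinset ∪ Gᶜ.edgeFinset = (⊤ : SimpleGraph V).edgeFinset := by
      rw [← SimpleGraph.edgeFinset_sup]
      exact Set.toFinset_congr (by rw [sup_compl_eq_top])
    rw [hu, SimpleGraph.card_edgeFinset_top_eq_card_choose_two, hc]
  -- trivial case K ≤ 1
  have hKle : K ≤ c / 2 := by omega
  by_cases hK1 : K ≤ 1
  · exfalso
    have h01 : K = 0 ∨ K = 1 := by omega
    have hch : c.choose 2 ≤ hN (c + 1) K := by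
      rcases h01 with h | h
      · rw [h]; simpa [hN] using Nat.choose_le_choose 2 (Nat.le_succ c)
      · rw [h]; simp [hN]
    omega
  push_neg at hK1
  have hc4 : 4 ≤ c := by omega
  -- the complement graph has an edge
  have hedge : ∃ u v : V, Gᶜ.Adj u v := by
    by_contra hno
    push_neg at hno
    apply hnc
    apply complete_hamConn
    intro u v huv
    by_contra hadj
    exact hno u v ((G.compl_adj _ _).2 ⟨huv, hadj⟩)
  -- minimum vertex cover of the complement
  obtain ⟨S₀, hS₀mem, hS₀min⟩ := Finset.exists_min_image
    (Finset.univ.powerset.filter (fun S => ∀ u v : V, Gᶜ.Adj u v → u ∈ S ∨ v ∈ S))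
    Finset.card ⟨Finset.univ, by simp⟩
  have hS₀cov : ∀ u v : V, Gᶜ.Adj u v → u ∈ S₀ ∨ v ∈ S₀ :=
    (Finset.mem_filter.1 hS₀mem).2
  set τ := S₀.card with hτdef
  have hτpos : 1 ≤ τ := by
    obtain ⟨u, v, huv⟩ := hedge
    rcases hS₀cov u v huv with h | h <;>
      exact Finset.card_pos.2 ⟨_, h⟩
  -- key degree fact for cover vertices
  have factA : ∀ v ∈ S₀, G.degree v ≤ τ + 1 := by
    intro v hv
    have herase : ¬ (∀ u w : V, Gᶜ.Adj u w → u ∈ S₀.erase v ∨ w ∈ S₀.erase v) := by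
      intro hcov
      have hle : S₀.card ≤ (S₀.erase v).card := by
        apply hS₀min
        simp only [Finset.mem_filter, Finset.mem_powerset]
        exact ⟨Finset.subset_univ _, hcov⟩
      have := Finset.card_erase_of_mem hv
      omega
    push_neg at herase
    obtain ⟨u, w, hadj, hu, hw⟩ := herase
    obtain ⟨u₀, hadj₀, hu₀⟩ : ∃ u₀, Gᶜ.Adj v u₀ ∧ u₀ ∉ S₀ := by
      rcases hS₀cov u w hadj with h | h
      · have huv : u = v := by
          by_contra hne
          exact hu (Finset.mem_erase.2 ⟨hne, h⟩)
        refine ⟨w, huv ▸ hadj, fun hwS => ?_⟩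
        have hwv : w ≠ v := fun hh => (Gᶜ.ne_of_adj hadj) (by rw [huv, hh])
        exact hw (Finset.mem_erase.2 ⟨hwv, hwS⟩)
      · have hwv : w = v := by
          by_contra hne
          exact hw (Finset.mem_erase.2 ⟨hne, h⟩)
        refine ⟨u, (hwv ▸ hadj).symm, fun huS => ?_⟩
        have huv : u ≠ v := fun hh => (Gᶜ.ne_of_adj hadj) (by rw [hwv, hh])
        exact hu (Finset.mem_erase.2 ⟨huv, huS⟩)
    have hDu₀ : Gᶜ.degree u₀ ≤ τ := by
      have hsub : Gᶜ.neighborFinset u₀ ⊆ S₀ := by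
        intro w' hw'
        rw [SimpleGraph.mem_neighborFinset] at hw'
        rcases hS₀cov u₀ w' hw' with h | h
        · exact absurd h hu₀
        · exact h
      exact Finset.card_le_card hsub
    have hvu : v ≠ u₀ := Gᶜ.ne_of_adj hadj₀
    have hnadj : ¬ G.Adj v u₀ := ((G.compl_adj _ _).1 hadj₀).2
    have hcl := hclosed v u₀ hvu hnadj
    rw [hdeg, hdeg] at hcl
    have h1 := hcompl u₀
    have h2 := hdegle u₀
    omega
  -- case 1 : small cover gives option (i)
  by_cases hcase1 : τ + 1 ≤ K - 1
  · left
    refine ⟨τ + 1, by omega, by omega, S₀, by omega, ?_, ?_⟩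
    · intro v hv
      rw [hdeg]
      exact factA v hv
    · intro x hx y hy hxy
      by_contra habs
      have : Gᶜ.Adj x y := (G.compl_adj _ _).2 ⟨hxy, habs⟩
      rcases hS₀cov x y this with h | h
      · exact hx (by simpa using h)
      · exact hy (by simpa using h)
  -- option (ii) or contradiction
  by_cases hii : (∃ t : ℕ, K + 1 ≤ t ∧ t ≤ c / 2 ∧
      ∃ T : Finset V, T.card = t - 1 ∧ ∀ v ∈ T, degN G v ≤ t)
  · right; exact hii
  exfalso
  have hcount : ∀ t : ℕ, K + 1 ≤ t → t ≤ c / 2 →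
      (Finset.univ.filter (fun v => G.degree v ≤ t)).card ≤ t - 2 := by
    intro t ht1 ht2
    by_contra hbig
    push_neg at hbig
    have hcard : t - 1 ≤ (Finset.univ.filter (fun v => G.degree v ≤ t)).card := by omega
    obtain ⟨T, hTsub, hTcard⟩ := Finset.exists_subset_card_eq hcard
    refine hii ⟨t, ht1, ht2, T, hTcard, fun v hv => ?_⟩
    rw [hdeg]
    exact (Finset.mem_filter.1 (hTsub hv)).2
  -- the medium-degree set is a cover
  set Cm := Finset.univ.filter (fun v => G.degree v ≤ c / 2) with hCmdef
  have hCmD : ∀ v ∈ Cm, G.degree v ≤ c / 2 := fun v hv => (Finset.mem_filter.1 hv).2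
  have hCmcov : ∀ u v : V, Gᶜ.Adj u v → u ∈ Cm ∨ v ∈ Cm := by
    intro u v huv
    have hne := Gᶜ.ne_of_adj huv
    have h := hclosed u v hne ((G.compl_adj _ _).1 huv).2
    rw [hdeg, hdeg] at h
    simp only [hCmdef, Finset.mem_filter, Finset.mem_univ, true_and]
    omega
  have hτγ : τ ≤ Cm.card := by
    apply hS₀min
    simp only [Finset.mem_filter, Finset.mem_powerset]
    exact ⟨Finset.subset_univ _, hCmcov⟩
  -- main lower bound on complement edges
  have hEc : (K - 1) * (2 * c - 3 * K) ≤ 2 * Gᶜ.edgeFinset.card := by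
    by_cases hcase2 : K ≤ τ
    · -- big cover
      by_cases hKm : K + 1 ≤ c / 2
      · -- contradiction with hcount
        exfalso
        have hγ : Cm.card ≤ c / 2 - 2 := hcount (c / 2) hKm le_rfl
        have hτm : τ + 1 ≤ c / 2 := by omega
        have hsub : S₀ ⊆ Finset.univ.filter (fun v => G.degree v ≤ τ + 1) := by
          intro v hv
          simp only [Finset.mem_filter, Finset.mem_univ, true_and]
          exact factA v hv
        have h1 := Finset.card_le_card hsub
        have h2 := hcount (τ + 1) (by omega) hτm
        omega
      · -- K = c / 2 : use counting on Cm
        have hKm' : K = c / 2 := by omega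
        set γ := Cm.card with hγdef
        have hγm : c / 2 ≤ γ := by omega
        have hmemD : ∀ v ∈ Cm, c - 1 - c / 2 ≤ Gᶜ.degree v := by
          intro v hv
          have h1 := hCmD v hv
          have h2 := hcompl v
          omega
        have hsumC : γ * (c - 1 - c / 2) ≤ ∑ v ∈ Cm, Gᶜ.degree v := by
          calc γ * (c - 1 - c / 2) = Cm.card • (c - 1 - c / 2) := by
                rw [smul_eq_mul]
            _ ≤ ∑ v ∈ Cm, Gᶜ.degree v := Finset.card_nsmul_le_sum _ _ _ hmemD
        have hB1 : ∑ v ∈ Cm, Gᶜ.degree v ≤ 2 * Gᶜ.edgeFinset.card := by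
          calc ∑ v ∈ Cm, Gᶜ.degree v ≤ ∑ v ∈ Finset.univ, Gᶜ.degree v :=
                Finset.sum_le_sum_of_subset (Finset.subset_univ _)
            _ = 2 * Gᶜ.edgeFinset.card := Gᶜ.sum_degrees_eq_twice_card_edges
        have hB2 : ∑ v ∈ Cm, Gᶜ.degree v ≤ Gᶜ.edgeFinset.card + γ.choose 2 :=
          sum_deg_le Gᶜ Cm
        have h2γ : 2 * γ.choose 2 = γ * (γ - 1) := two_mul_choose_two γ
        -- integer arithmetic
        set E := Gᶜ.edgeFinset.card with hEdef
        have hm1 : 2 * (c / 2) ≤ c := by omega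
        have hm2 : c ≤ 2 * (c / 2) + 1 := by omega
        set m := c / 2 with hmdef
        by_cases hγj : c - m ≤ γ
        · -- use hB1
          have key : (c - m) * (c - 1 - m) ≤ γ * (c - 1 - m) :=
            Nat.mul_le_mul_right _ hγj
          have h1 : γ * (c - 1 - m) ≤ 2 * E := le_trans hsumC hB1
          rw [hKm']
          zify [(by omega : m ≤ c), (by omega : m ≤ c - 1), (by omega : 1 ≤ c),
            (by omega : 1 ≤ m), (by omega : 3 * m ≤ 2 * c)] at key h1 ⊢
          exact arith1 c m γ E (by exact_mod_cast hm1) (by exact_mod_cast hm2) key h1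
        · -- use hB2
          push_neg at hγj
          have h1 : γ * (c - 1 - m) ≤ E + γ.choose 2 := le_trans hsumC hB2
          have h2 : 2 * (γ * (c - 1 - m)) ≤ 2 * E + γ * (γ - 1) := by omega
          rw [hKm']
          zify [(by omega : 1 ≤ γ), (by omega : m ≤ c - 1), (by omega : 1 ≤ c),
            (by omega : 1 ≤ m), (by omega : 3 * m ≤ 2 * c)] at h2 ⊢
          refine arith2 c m γ E (by exact_mod_cast hm1) (by exact_mod_cast hm2)
            (by exact_mod_cast hγm) (by push_cast; omega) h2
    · -- τ = K - 1 : count edges at the minimum cover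
      push_neg at hcase2
      have hτK : τ = K - 1 := by omega
      have hmemD : ∀ v ∈ S₀, c - 2 - τ ≤ Gᶜ.degree v := by
        intro v hv
        have h1 := factA v hv
        have h2 := hcompl v
        omega
      have hsumC : τ * (c - 2 - τ) ≤ ∑ v ∈ S₀, Gᶜ.degree v := by
        calc τ * (c - 2 - τ) = S₀.card • (c - 2 - τ) := by rw [smul_eq_mul]
          _ ≤ ∑ v ∈ S₀, Gᶜ.degree v := Finset.card_nsmul_le_sum _ _ _ hmemD
      have hB2 : ∑ v ∈ S₀, Gᶜ.degree v ≤ Gᶜ.edgeFinset.card + τ.choose 2 :=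
        sum_deg_le Gᶜ S₀
      have h2τ : 2 * τ.choose 2 = τ * (τ - 1) := two_mul_choose_two τ
      have h1 : 2 * (τ * (c - 2 - τ)) ≤ 2 * Gᶜ.edgeFinset.card + τ * (τ - 1) := by
        have := le_trans hsumC hB2
        omega
      zify [(by omega : 1 ≤ τ), (by omega : 3 * K ≤ 2 * c), (by omega : 1 ≤ K),
        (by omega : τ ≤ c - 2), (by omega : 2 ≤ c)] at h1 ⊢
      refine arith3 c K τ (Gᶜ.edgeFinset.card) ?_ (by push_cast; omega) h1
      push_cast
      omega
  -- final contradiction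
  have h2hN : 2 * hN (c + 1) K = (c + 1 - K) * (c - K) + 2 * (K * (K - 1)) := by
    rw [hN, Nat.mul_add, two_mul_choose_two]
    congr 2
    omega
  have h2c : 2 * c.choose 2 = c * (c - 1) := two_mul_choose_two c
  set E := Gᶜ.edgeFinset.card
  set eG := G.edgeFinset.card
  have hsum2 : 2 * eG + 2 * E = c * (c - 1) := by omega
  have hge : 2 * hN (c + 1) K + 2 ≤ 2 * eG := by omega
  rw [h2hN] at hge
  zify [(by omega : K ≤ c + 1), (by omega : K ≤ c), (by omega : 3 * K ≤ 2 * c),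
    (by omega : 1 ≤ K), (by omega : 1 ≤ c)] at hsum2 hge hEc
  exact arith4 c K eG E hsum2 hge hEc
end

section
/- Let G be a graph and C a locally maximal cycle of G. Then C is also a locally maximal cycle of the C-closure of G (the graph obtained from G by replacing the induced subgraph on V(C) by its (c+1)-closure, where c = |C|). -/
open SimpleGraph

/-- A graph is 2-connected: at least 3 vertices and deleting any vertex leaves it connected. -/
def TwoConnected {V : Type*} [Fintype V] (G : SimpleGraph V) : Prop :=
  3 ≤ Fintype.card V ∧
    ∀ v : V, (((⊤ : G.Subgraph).deleteVerts {v}).coe).Connected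

/-- `p` is a longest cycle of `G`. -/
def IsLongestCycle {V : Type*} (G : SimpleGraph V) {v0 : V} (p : G.Walk v0 v0) : Prop :=
  p.IsCycle ∧ ∀ (w : V) (q : G.Walk w w), q.IsCycle → q.length ≤ p.length

/-- `R` is the vertex set of a connected component of `G - Cs` (the graph obtained
from `G` by deleting the vertex set `Cs`). -/
def IsCompOutside {V : Type*} (G : SimpleGraph V) (Cs R : Set V) : Prop :=
  R.Nonempty ∧ Disjoint R Cs ∧ (G.induce R).Connected ∧
    ∀ u ∈ R, ∀ v : V, G.Adj u v → v ∈ R ∪ Cs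
/-- An edge (of `Sym2 V`) crossing between `Cs` and its complement: it has an endpoint in
`Cs` and an endpoint outside `Cs`. -/
def crossEdge {V : Type*} (Cs : Set V) (e : Sym2 V) : Prop :=
  (∃ a ∈ e, a ∈ Cs) ∧ (∃ b ∈ e, b ∉ Cs)

open Classical in
/-- The number of edges in the list `l` having exactly one endpoint in `Cs`. -/
noncomputable def crossCount {V : Type*} (Cs : Set V) (l : List (Sym2 V)) : ℕ :=
  l.countP (fun e => decide (crossEdge Cs e))

/-- The cycle `p` is locally maximal in `G`: there is no cycle `q` with `|E(q)| > |E(p)|`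
using at most two edges with exactly one endpoint on `p`. -/
def IsLocallyMaximal {V : Type*} (G : SimpleGraph V) {v0 : V} (p : G.Walk v0 v0) : Prop :=
  p.IsCycle ∧ ∀ (w : V) (q : G.Walk w w), q.IsCycle →
    ¬ (p.length < q.length ∧ crossCount {x | x ∈ p.support} q.edges ≤ 2)
/-- Degree of `u` within the vertex set `Cs`: number of neighbours of `u` lying in `Cs`. -/
noncomputable def degIn {V : Type*} (G : SimpleGraph V) (Cs : Set V) (u : V) : ℕ :=
  (G.neighborSet u ∩ Cs).ncard

/-- One step of the `(c+1)`-closure operation on the induced subgraph on `Cs`: join a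
nonadjacent pair in `Cs` whose degree sum within `Cs` is at least `c+1`. -/
def CStep {V : Type*} (c : ℕ) (Cs : Set V) (G G' : SimpleGraph V) : Prop :=
  ∃ u v, u ∈ Cs ∧ v ∈ Cs ∧ u ≠ v ∧ ¬ G.Adj u v ∧
    c + 1 ≤ degIn G Cs u + degIn G Cs v ∧
    G' = G ⊔ SimpleGraph.fromEdgeSet {s(u, v)}

/-- `H` is the `C`-closure of `G` for the cycle `p` (of length `c = |V(C)|`): it is
obtained from `G` by recursively joining nonadjacent pairs on `C` whose degree sum within
`V(C)` is at least `c+1`, until no such pair remains. -/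
def IsCClosure {V : Type*} (G : SimpleGraph V) {v0 : V} (p : G.Walk v0 v0)
    (H : SimpleGraph V) : Prop :=
  Relation.ReflTransGen (CStep p.length {x | x ∈ p.support}) G H ∧
    ∀ u v : V, u ∈ p.support → v ∈ p.support → u ≠ v → ¬ H.Adj u v →
      degIn H {x | x ∈ p.support} u + degIn H {x | x ∈ p.support} v < p.length + 1

section Aux

open SimpleGraph Walk

variable {V : Type*}

lemma not_crossEdge_of_mem {Cs : Set V} {a b : V} (ha : a ∈ Cs) (hb : b ∈ Cs) :
    ¬ crossEdge Cs s(a, b) := by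
  rintro ⟨-, x, hx, hx2⟩
  rw [Sym2.mem_iff] at hx
  rcases hx with rfl | rfl <;> contradiction

lemma crossEdge_of_mixed {Cs : Set V} {a b : V} (ha : a ∈ Cs) (hb : b ∉ Cs) :
    crossEdge Cs s(a, b) := ⟨⟨a, by simp, ha⟩, ⟨b, by simp, hb⟩⟩

lemma crossEdge_of_mixed' {Cs : Set V} {a b : V} (ha : a ∉ Cs) (hb : b ∈ Cs) :
    crossEdge Cs s(a, b) := ⟨⟨b, by simp, hb⟩, ⟨a, by simp, ha⟩⟩

lemma crossCount_perm {Cs : Set V} {l l' : List (Sym2 V)} (h : l.Perm l') :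
    crossCount Cs l = crossCount Cs l' := h.countP_eq _

open Classical in
lemma crossCount_cons {Cs : Set V} (e : Sym2 V) (l : List (Sym2 V)) :
    crossCount Cs (e :: l) = crossCount Cs l + (if crossEdge Cs e then 1 else 0) := by
  simp [crossCount, List.countP_cons]

lemma crossCount_cons_of_not {Cs : Set V} {e : Sym2 V} (he : ¬ crossEdge Cs e)
    (l : List (Sym2 V)) : crossCount Cs (e :: l) = crossCount Cs l := by
  classical
  rw [crossCount_cons, if_neg he, Nat.add_zero]

lemma crossCount_append {Cs : Set V} (l l' : List (Sym2 V)) :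
    crossCount Cs (l ++ l') = crossCount Cs l + crossCount Cs l' := by
  simp [crossCount, List.countP_append]

lemma crossCount_reverse {Cs : Set V} (l : List (Sym2 V)) :
    crossCount Cs l.reverse = crossCount Cs l :=
  crossCount_perm (List.reverse_perm l)

lemma countP_eq_sum {α : Type*} (p : α → Bool) (d : α) :
    ∀ (l : List α), l.countP p = ∑ i ∈ Finset.range l.length,
      (if p (l.getD i d) then 1 else 0)
  | [] => by simp
  | a :: t => by
    rw [List.countP_cons]
    simp only [List.length_cons, Finset.sum_range_succ']
    simp [countP_eq_sum p d t]

lemma three_le_crossCount {Cs : Set V} (l : List (Sym2 V)) (d : Sym2 V) (i j k : ℕ)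
    (hij : i < j) (hjk : j < k) (hk : k < l.length)
    (hi : crossEdge Cs (l.getD i d)) (hj : crossEdge Cs (l.getD j d))
    (hk' : crossEdge Cs (l.getD k d)) : 3 ≤ crossCount Cs l := by
  classical
  rw [crossCount, countP_eq_sum _ d]
  have hsub : ({i, j, k} : Finset ℕ) ⊆ Finset.range l.length := by
    intro x hx
    simp only [Finset.mem_insert, Finset.mem_singleton] at hx
    rcases hx with rfl | rfl | rfl <;> (rw [Finset.mem_range]; omega)
  have hone : ∀ x ∈ ({i, j, k} : Finset ℕ),
      (if (decide (crossEdge Cs (l.getD x d))) = true then 1 else 0) = 1 := by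
    intro x hx
    simp only [Finset.mem_insert, Finset.mem_singleton] at hx
    rcases hx with rfl | rfl | rfl
    · rw [decide_eq_true hi]; rfl
    · rw [decide_eq_true hj]; rfl
    · rw [decide_eq_true hk']; rfl
  have hcard : ({i, j, k} : Finset ℕ).card = 3 := by
    rw [Finset.card_insert_of_notMem (by simp; omega),
      Finset.card_insert_of_notMem (by simp; omega), Finset.card_singleton]
  calc 3 = ∑ x ∈ ({i, j, k} : Finset ℕ),
        (if (decide (crossEdge Cs (l.getD x d))) = true then 1 else 0) := by
        rw [Finset.sum_congr rfl hone]; simp [hcard]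
    _ ≤ _ := Finset.sum_le_sum_of_subset hsub

variable {K : SimpleGraph V}

lemma edges_getD {d : Sym2 V} {x : V} :
    ∀ {a b : V} (P : K.Walk a b) (i : ℕ), i < P.length →
      P.edges.getD i d = s(P.support.getD i x, P.support.getD (i + 1) x)
  | a, _, Walk.nil, i, h => by simp at h
  | a, b, Walk.cons h' P', 0, h => by
    rw [Walk.edges_cons, Walk.support_cons, List.getD_cons_zero, List.getD_cons_zero,
      List.getD_cons_succ, Walk.support_eq_cons, List.getD_cons_zero]
  | a, b, Walk.cons h' P', (i + 1), h => by
    rw [Walk.edges_cons, Walk.support_cons, List.getD_cons_succ, List.getD_cons_succ,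
      List.getD_cons_succ]
    exact edges_getD P' i (by simpa using h)

/-- At most one "exit" position along a walk, if the crossing count is at most 2. -/
lemma exit_unique {Cs : Set V} {u v : V} (P : K.Walk u v)
    (hcross : crossCount Cs P.edges ≤ 2) {j j' : ℕ} (hjj' : j < j') (hj' : j' + 1 ≤ P.length)
    (h1 : P.support.getD j u ∈ Cs) (h2 : P.support.getD (j + 1) u ∉ Cs)
    (h3 : P.support.getD j' u ∈ Cs) (h4 : P.support.getD (j' + 1) u ∉ Cs) : False := by
  classical
  have hex : ∃ k, j < k ∧ k ≤ j' ∧ P.support.getD k u ∈ Cs := ⟨j', hjj', le_rfl, h3⟩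
  obtain ⟨hk1, hk2, hk3⟩ := Nat.find_spec hex
  set k := Nat.find hex with hkdef
  have hkj1 : k ≠ j + 1 := fun h => h2 (h ▸ hk3)
  have hgt : j + 1 < k := by omega
  have hk4 : P.support.getD (k - 1) u ∉ Cs := by
    intro hmem
    exact Nat.find_min hex (show k - 1 < k by omega) ⟨by omega, by omega, hmem⟩
  have hklt : k - 1 + 1 = k := by omega
  have e1 : crossEdge Cs (P.edges.getD j s(u, u)) := by
    rw [edges_getD (x := u) P j (by omega)]
    exact crossEdge_of_mixed h1 h2
  have e2 : crossEdge Cs (P.edges.getD (k - 1) s(u, u)) := by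
    rw [edges_getD (x := u) P (k - 1) (by omega)]
    rw [hklt]
    exact crossEdge_of_mixed' hk4 hk3
  have e3 : crossEdge Cs (P.edges.getD j' s(u, u)) := by
    rw [edges_getD (x := u) P j' (by omega)]
    exact crossEdge_of_mixed h3 h4
  have := three_le_crossCount P.edges s(u, u) j (k - 1) j' (by omega) (by omega)
    (by rw [Walk.length_edges]; omega) e1 e2 e3
  omega

/-- Construction 1: a common neighbour of `u` and `v` inside `Cs` but off the path
yields a longer cycle with the same crossing count. -/
lemma cycle_off_path {Cs : Set V} {c : ℕ}
    (LM : ∀ (w : V) (q : K.Walk w w), q.IsCycle →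
      ¬ (c < q.length ∧ crossCount Cs q.edges ≤ 2))
    {u v w : V} (hu : u ∈ Cs) (hv : v ∈ Cs) (hw : w ∈ Cs) (hne : u ≠ v)
    (P : K.Walk u v) (hP : P.IsPath) (hlen : c ≤ P.length)
    (hcross : crossCount Cs P.edges ≤ 2)
    (h1 : K.Adj u w) (h2 : K.Adj v w) (hwP : w ∉ P.support) : False := by
  classical
  set R : K.Walk w u := Walk.cons h2.symm P.reverse with hR
  have hRpath : R.IsPath := by
    rw [hR, Walk.cons_isPath_iff]
    refine ⟨hP.reverse, ?_⟩
    rw [Walk.support_reverse, List.mem_reverse]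
    exact hwP
  have hmem : s(u, w) ∉ R.edges := by
    rw [hR, Walk.edges_cons, List.mem_cons]
    rintro (heq | hmem)
    · rw [Sym2.eq_iff] at heq
      rcases heq with ⟨rfl, -⟩ | ⟨rfl, -⟩
      · exact h1.ne rfl
      · exact hne rfl
    · rw [Walk.edges_reverse, List.mem_reverse] at hmem
      exact hwP (P.snd_mem_support_of_mem_edges hmem)
  have hQ : (Walk.cons h1 R).IsCycle := (Walk.cons_isCycle_iff R h1).mpr ⟨hRpath, hmem⟩
  refine LM u (Walk.cons h1 R) hQ ⟨?_, ?_⟩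
  · rw [Walk.length_cons, hR, Walk.length_cons, Walk.length_reverse]; omega
  · rw [Walk.edges_cons, hR, Walk.edges_cons, Walk.edges_reverse,
      crossCount_cons_of_not (not_crossEdge_of_mem hu hw),
      crossCount_cons_of_not (not_crossEdge_of_mem hw hv), crossCount_reverse]
    exact hcross

/-- Construction 2: chords `u a` and `v b` across a consecutive pair `b, a` of the path
yield a longer cycle with crossing count at most that of the path. -/
lemma cycle_cross_pair {Cs : Set V} {c : ℕ}
    (LM : ∀ (w : V) (q : K.Walk w w), q.IsCycle →
      ¬ (c < q.length ∧ crossCount Cs q.edges ≤ 2))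
    {u v b a : V} (hu : u ∈ Cs) (hv : v ∈ Cs) (ha : a ∈ Cs) (hb : b ∈ Cs)
    (hne : u ≠ v) (hav : a ≠ v) (hbu : b ≠ u)
    (P₁ : K.Walk u b) (e : K.Adj b a) (P₂ : K.Walk a v)
    (hP : (P₁.append (Walk.cons e P₂)).IsPath)
    (hlen : c ≤ (P₁.append (Walk.cons e P₂)).length)
    (hcross : crossCount Cs (P₁.append (Walk.cons e P₂)).edges ≤ 2)
    (ha' : K.Adj u a) (hb' : K.Adj v b) : False := by
  classical
  have hsupp : (P₁.append (Walk.cons e P₂)).support = P₁.support ++ P₂.support := by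
    rw [Walk.support_append, Walk.support_cons, List.tail_cons]
  have hnd : (P₁.support ++ P₂.support).Nodup := by
    rw [← hsupp]; exact hP.support_nodup
  rw [List.nodup_append] at hnd
  obtain ⟨hnd1, hnd2, hdisj⟩ := hnd
  set R : K.Walk a u := P₂.append (Walk.cons hb' P₁.reverse) with hRdef
  have hRsupp : R.support = P₂.support ++ P₁.support.reverse := by
    rw [hRdef, Walk.support_append, Walk.support_cons, List.tail_cons, Walk.support_reverse]
  have hRpath : R.IsPath := by
    rw [Walk.isPath_def, hRsupp, List.nodup_append]
    refine ⟨hnd2, List.nodup_reverse.mpr hnd1, ?_⟩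
    intro x hx hx' hx''
    rw [List.mem_reverse] at hx''
    exact (hdisj hx' hx'' x hx).symm
  have hmem : s(u, a) ∉ R.edges := by
    rw [hRdef, Walk.edges_append, Walk.edges_cons, List.mem_append, List.mem_cons]
    rintro (hmem | heq | hmem)
    · exact hdisj _ P₁.start_mem_support _ (P₂.fst_mem_support_of_mem_edges hmem) rfl
    · rw [Sym2.eq_iff] at heq
      rcases heq with ⟨rfl, -⟩ | ⟨-, rfl⟩
      · exact hne rfl
      · exact hav rfl
    · rw [Walk.edges_reverse, List.mem_reverse] at hmem
      exact hdisj _ (P₁.snd_mem_support_of_mem_edges hmem) _ P₂.start_mem_support rfl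
  have hQ : (Walk.cons ha' R).IsCycle := (Walk.cons_isCycle_iff R ha').mpr ⟨hRpath, hmem⟩
  refine LM u (Walk.cons ha' R) hQ ⟨?_, ?_⟩
  · rw [Walk.length_cons, hRdef, Walk.length_append, Walk.length_cons, Walk.length_reverse]
    rw [Walk.length_append, Walk.length_cons] at hlen
    omega
  · have hP_edges : crossCount Cs (P₁.append (Walk.cons e P₂)).edges
        = crossCount Cs P₁.edges + crossCount Cs (Walk.cons e P₂).edges := by
      rw [Walk.edges_append, crossCount_append]
    have h2le : crossCount Cs P₂.edges ≤ crossCount Cs (Walk.cons e P₂).edges := by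
      classical
      rw [Walk.edges_cons, crossCount_cons]; omega
    rw [Walk.edges_cons, hRdef, Walk.edges_append, Walk.edges_cons,
      crossCount_cons_of_not (not_crossEdge_of_mem hu ha), crossCount_append,
      crossCount_cons_of_not (not_crossEdge_of_mem hv hb), Walk.edges_reverse,
      crossCount_reverse]
    omega

/-- Split a walk at position `j`. -/
lemma exists_split : ∀ {u v : V} (P : K.Walk u v) (j : ℕ), j + 1 ≤ P.length →
    ∃ (b a : V) (P₁ : K.Walk u b) (e : K.Adj b a) (P₂ : K.Walk a v),
      P = P₁.append (Walk.cons e P₂) ∧ P₁.length = j := by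
  intro u v P
  induction P with
  | nil => intro j hj; simp at hj
  | cons h P' ih =>
    intro j hj
    match j with
    | 0 =>
      exact ⟨_, _, Walk.nil, h, P', rfl, rfl⟩
    | (j + 1) =>
      obtain ⟨b, a, P₁, e, P₂, hsplit, hlen⟩ := ih j (by
        rw [Walk.length_cons] at hj; omega)
      exact ⟨b, a, Walk.cons h P₁, e, P₂, by rw [Walk.cons_append, ← hsplit],
        by rw [Walk.length_cons, hlen]⟩

end Aux

section Main

open SimpleGraph Walk

variable {V : Type*}

lemma getD_append_left' {α : Type*} {l₁ l₂ : List α} {d : α} {i : ℕ} (h : i < l₁.length) :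
    (l₁ ++ l₂).getD i d = l₁.getD i d := by
  rw [List.getD_eq_getElem _ _ (by rw [List.length_append]; omega), List.getD_eq_getElem _ _ h,
    List.getElem_append_left h]

lemma getD_append_right' {α : Type*} {l₁ l₂ : List α} {d : α} {i : ℕ} (h : l₁.length ≤ i)
    (h2 : i < l₁.length + l₂.length) :
    (l₁ ++ l₂).getD i d = l₂.getD (i - l₁.length) d := by
  rw [List.getD_eq_getElem _ _ (by rw [List.length_append]; omega),
      List.getD_eq_getElem _ _ (by omega), List.getElem_append_right h]

lemma getD_getLast' {α : Type*} {l : List α} {d : α} (h : l ≠ []) :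
    l.getD (l.length - 1) d = l.getLast h := by
  have hl : 0 < l.length := List.length_pos_iff.mpr h
  rw [List.getD_eq_getElem _ _ (by omega), List.getLast_eq_getElem]

/-- Extract from a cycle through the edge `s(u,v)` a path from `v` to `u` carrying
all remaining edges. -/
lemma extract_path {K' : SimpleGraph V} {u v : V} (hne : u ≠ v) (q : K'.Walk u u)
    (hq : q.IsCycle) (he : s(u, v) ∈ q.edges) :
    ∃ P : K'.Walk v u, P.IsPath ∧ q.edges.Perm (s(u, v) :: P.edges) := by
  cases q with
  | nil => simp at he
  | @cons _ x _ h r =>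
    rw [Walk.cons_isCycle_iff] at hq
    rw [Walk.edges_cons, List.mem_cons] at he
    rcases he with he | he
    · rw [Sym2.eq_iff] at he
      rcases he with ⟨-, rfl⟩ | ⟨rfl, hvu⟩
      · exact ⟨r, hq.1, by rw [Walk.edges_cons]⟩
      · exact absurd hvu.symm hne
    · have hux : u ≠ x := h.ne
      obtain ⟨y, h₂, w, hw⟩ := Walk.exists_eq_cons_of_ne hux r.reverse
      have hrp : r.reverse.IsPath := hq.1.reverse
      rw [hw, Walk.cons_isPath_iff] at hrp
      have he' : s(u, v) ∈ r.reverse.edges := by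
        rw [Walk.edges_reverse, List.mem_reverse]; exact he
      rw [hw, Walk.edges_cons, List.mem_cons] at he'
      rcases he' with he' | he'
      · rw [Sym2.eq_iff] at he'
        rcases he' with ⟨-, rfl⟩ | ⟨rfl, hvu⟩
        · refine ⟨w.concat h.symm, ?_, ?_⟩
          · rw [Walk.isPath_def, Walk.support_concat,
              List.nodup_append]
            refine ⟨hrp.1.support_nodup, List.nodup_singleton u, ?_⟩
            intro z hz z' hz' hzz
            rw [List.mem_singleton] at hz'
            rw [hzz, hz'] at hz
            exact hrp.2 hz
          · have h3 : r.edges.reverse = s(u, v) :: w.edges := by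
              rw [← Walk.edges_reverse, hw, Walk.edges_cons]
            have h4 : r.edges.Perm (s(u, v) :: w.edges) :=
              h3 ▸ (List.reverse_perm r.edges).symm
            rw [Walk.edges_cons, Walk.edges_concat]
            refine (h4.cons s(u, x)).trans ?_
            refine (List.Perm.swap _ _ _).trans ?_
            refine List.Perm.cons _ ?_
            have hxu : s(x, u) = s(u, x) := Sym2.eq_swap
            rw [hxu, List.concat_eq_append]
            exact (List.perm_append_singleton _ _).symm
        · exact absurd hvu.symm hne
      · exact absurd (w.fst_mem_support_of_mem_edges he') hrp.2

/-- Core counting argument: if the cycle-condition (local maximality for vertex set `Cs`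
of size `c`) holds in `K`, and there is a path in `K` from `u` to `v` of length at least
`c` with at most two crossing edges, then the degree sum of the nonadjacent pair
`u, v` within `Cs` is at most `c`. -/
lemma core_count [Fintype V] {K : SimpleGraph V} {Cs : Set V} {c : ℕ} (hcard : Cs.ncard = c)
    (LM : ∀ (w : V) (q : K.Walk w w), q.IsCycle →
      ¬ (c < q.length ∧ crossCount Cs q.edges ≤ 2))
    {u v : V} (hu : u ∈ Cs) (hv : v ∈ Cs) (hne : u ≠ v) (hnadj : ¬ K.Adj u v)
    (P : K.Walk u v) (hP : P.IsPath) (hlen : c ≤ P.length)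
    (hcross : crossCount Cs P.edges ≤ 2) : degIn K Cs u + degIn K Cs v ≤ c := by
  classical
  have hLnd : P.support.Nodup := hP.support_nodup
  have hLlen : P.support.length = P.length + 1 := P.length_support
  have hL0 : P.support.getD 0 u = u := by
    rw [Walk.support_eq_cons]; exact List.getD_cons_zero
  have hlast : P.support.getD P.length u = v := by
    have hgl := P.getLast_support
    have : P.support.getD (P.support.length - 1) u = v := by
      rw [getD_getLast' P.support_ne_nil]; exact hgl
    rwa [hLlen, Nat.add_sub_cancel] at this
  have hidx_lt : ∀ b, b ∈ P.support → P.support.idxOf b < P.support.length :=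
    fun b hb => List.idxOf_lt_length_iff.mpr hb
  have hgetidx : ∀ b, b ∈ P.support → P.support.getD (P.support.idxOf b) u = b := by
    intro b hb
    rw [List.getD_eq_getElem _ _ (hidx_lt b hb)]
    exact List.getElem_idxOf (hidx_lt b hb)
  have hgetinj : ∀ i j, i < P.support.length → j < P.support.length →
      P.support.getD i u = P.support.getD j u → i = j := by
    intro i j hi hj hij
    rw [List.getD_eq_getElem _ _ hi, List.getD_eq_getElem _ _ hj] at hij
    exact (hLnd.getElem_inj_iff).mp hij
  have hidxv : ∀ b, b ∈ P.support → b ≠ v → P.support.idxOf b + 1 < P.support.length := by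
    intro b hb hbv
    have h1 := hidx_lt b hb
    rcases Nat.lt_or_ge (P.support.idxOf b + 1) P.support.length with h | h
    · exact h
    · exfalso
      have h2 : P.support.idxOf b = P.length := by omega
      exact hbv (by rw [← hgetidx b hb, h2, hlast])
  set F := (Set.toFinite Cs).toFinset with hFdef
  have hmemF : ∀ x, x ∈ F ↔ x ∈ Cs := fun x => Set.Finite.mem_toFinset _
  have hFcard : F.card = c := by
    rw [← hcard, Set.ncard_eq_toFinset_card Cs (Set.toFinite Cs)]
  set A := F.filter (fun w => K.Adj u w) with hAdef
  set B := F.filter (fun w => K.Adj v w) with hBdef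
  have hdegu : degIn K Cs u = A.card := by
    rw [degIn, Set.ncard_eq_toFinset_card _ (Set.toFinite _)]
    congr 1
    ext x
    simp only [Set.Finite.mem_toFinset, Set.mem_inter_iff, SimpleGraph.mem_neighborSet,
      hAdef, Finset.mem_filter, hmemF x]
    tauto
  have hdegv : degIn K Cs v = B.card := by
    rw [degIn, Set.ncard_eq_toFinset_card _ (Set.toFinite _)]
    congr 1
    ext x
    simp only [Set.Finite.mem_toFinset, Set.mem_inter_iff, SimpleGraph.mem_neighborSet,
      hBdef, Finset.mem_filter, hmemF x]
    tauto
  have hAprop : ∀ a ∈ A, K.Adj u a ∧ a ∈ Cs ∧ a ≠ u ∧ a ≠ v := by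
    intro a haA
    rw [hAdef, Finset.mem_filter] at haA
    exact ⟨haA.2, (hmemF a).mp haA.1, fun h => K.irrefl (h ▸ haA.2),
      fun h => hnadj (h ▸ haA.2)⟩
  have hBprop : ∀ b ∈ B, K.Adj v b ∧ b ∈ Cs ∧ b ≠ v ∧ b ≠ u := by
    intro b hbB
    rw [hBdef, Finset.mem_filter] at hbB
    exact ⟨hbB.2, (hmemF b).mp hbB.1, fun h => K.irrefl (h ▸ hbB.2),
      fun h => hnadj (h ▸ hbB.2).symm⟩
  set nxt : V → V := fun b => P.support.getD (P.support.idxOf b + 1) u with hnxtdef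
  have hpat : ∀ b a, b ∈ P.support → b ≠ v → a = nxt b → K.Adj v b → K.Adj u a →
      a ∈ Cs → b ∈ Cs → False := by
    intro b a hbL hbv hanxt hvb hua haCs hbCs
    have hav : a ≠ v := fun h => hnadj (h ▸ hua)
    have hbu : b ≠ u := fun h => hnadj (h ▸ hvb).symm
    have hj : P.support.idxOf b + 1 < P.support.length := hidxv b hbL hbv
    have hgb : P.support.getD (P.support.idxOf b) u = b := hgetidx b hbL
    have hga : P.support.getD (P.support.idxOf b + 1) u = nxt b := rfl
    obtain ⟨j, hjdef⟩ : ∃ j, j = P.support.idxOf b := ⟨_, rfl⟩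
    rw [← hjdef] at hj hgb hga
    have hLlen' : P.support.length = P.length + 1 := hLlen
    obtain ⟨b', a', P₁, e, P₂, hsplit, hP₁len⟩ :=
      exists_split P j (by omega)
    have hsupp : P.support = P₁.support ++ P₂.support := by
      rw [hsplit, Walk.support_append, Walk.support_cons, List.tail_cons]
    have hP₁s : P₁.support.length = j + 1 := by
      rw [P₁.length_support, hP₁len]
    have hlen2 : P₁.support.length + P₂.support.length = P.support.length := by
      rw [hsupp, List.length_append]
    have hb' : b' = b := by
      have h1 : P.support.getD j u = b' := by
        rw [hsupp, getD_append_left' (by omega)]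
        have h2 : j = P₁.support.length - 1 := by omega
        rw [h2, getD_getLast' P₁.support_ne_nil]
        exact P₁.getLast_support
      rw [hgb] at h1
      exact h1.symm
    have ha' : a' = a := by
      have h1 : P.support.getD (j + 1) u = a' := by
        rw [hsupp, getD_append_right' (by omega) (by omega)]
        have h2 : j + 1 - P₁.support.length = 0 := by omega
        rw [h2, Walk.support_eq_cons]
        exact List.getD_cons_zero
      rw [hga, ← hanxt] at h1
      exact h1.symm
    subst hb'
    subst ha'
    rw [hsplit] at hP hlen hcross
    exact cycle_cross_pair LM hu hv haCs hbCs hne hav hbu P₁ e P₂ hP hlen hcross hua hvb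
  have hoff : ∀ x, x ∈ Cs → K.Adj u x → K.Adj v x → x ∉ P.support → False := by
    intro x hxCs hux hvx hxL
    exact cycle_off_path LM hu hv hxCs hne P hP hlen hcross hux hvx hxL
  have hnxt_mem : ∀ b, b ∈ P.support → b ≠ v → nxt b ∈ P.support := by
    intro b hb hbv
    rw [hnxtdef]
    simp only
    rw [List.getD_eq_getElem _ _ (hidxv b hb hbv)]
    exact List.getElem_mem _
  have hnxt_ne_u : ∀ b, b ∈ P.support → b ≠ v → nxt b ≠ u := by
    intro b hb hbv h
    have h2 : P.support.getD (P.support.idxOf b + 1) u = P.support.getD 0 u := by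
      rw [hL0]; exact h
    have := hgetinj _ _ (hidxv b hb hbv) (by omega) h2
    omega
  set f : V → V := fun b => if b ∈ P.support then (if nxt b ∈ Cs then nxt b else u) else b
    with hfdef
  have hmixed : ∀ a ∈ A, ∀ b ∈ B, a = f b → False := by
    intro a haA b hbB heq
    obtain ⟨hua, haCs, hau, hav⟩ := hAprop a haA
    obtain ⟨hvb, hbCs, hbv, hbu⟩ := hBprop b hbB
    rw [hfdef] at heq
    simp only at heq
    by_cases hbL : b ∈ P.support
    · rw [if_pos hbL] at heq
      by_cases hnb : nxt b ∈ Cs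
      · rw [if_pos hnb] at heq
        exact hpat b a hbL hbv heq hvb hua haCs hbCs
      · rw [if_neg hnb] at heq
        exact hau heq
    · rw [if_neg hbL] at heq
      exact hoff a haCs hua (heq ▸ hvb) (heq ▸ hbL)
  have hcardle : A.card + B.card ≤ F.card := by
    rw [← Finset.card_disjSum]
    apply Finset.card_le_card_of_injOn (Sum.elim id f)
    · rintro (a | b) hx
      · rw [Finset.mem_coe, Finset.inl_mem_disjSum] at hx
        exact Finset.filter_subset _ _ hx
      · rw [Finset.mem_coe, Finset.inr_mem_disjSum] at hx
        obtain ⟨hvb, hbCs, hbv, hbu⟩ := hBprop b hx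
        simp only [Sum.elim_inr, hfdef, Finset.mem_coe]
        by_cases hbL : b ∈ P.support
        · by_cases hnb : nxt b ∈ Cs
          · rw [if_pos hbL, if_pos hnb, hmemF]; exact hnb
          · rw [if_pos hbL, if_neg hnb, hmemF]; exact hu
        · rw [if_neg hbL, hmemF]; exact hbCs
    · rintro (a | b) hx (a' | b') hy hxy
      · simp only [Sum.elim_inl, id] at hxy
        rw [hxy]
      · exfalso
        rw [Finset.mem_coe, Finset.inl_mem_disjSum] at hx
        rw [Finset.mem_coe, Finset.inr_mem_disjSum] at hy
        simp only [Sum.elim_inl, Sum.elim_inr, id] at hxy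
        exact hmixed a hx b' hy hxy
      · exfalso
        rw [Finset.mem_coe, Finset.inr_mem_disjSum] at hx
        rw [Finset.mem_coe, Finset.inl_mem_disjSum] at hy
        simp only [Sum.elim_inl, Sum.elim_inr, id] at hxy
        exact hmixed a' hy b hx hxy.symm
      · rw [Finset.mem_coe, Finset.inr_mem_disjSum] at hx hy
        obtain ⟨hvb, hbCs, hbv, hbu⟩ := hBprop b hx
        obtain ⟨hvb', hbCs', hbv', hbu'⟩ := hBprop b' hy
        simp only [Sum.elim_inr, hfdef] at hxy
        suffices h : b = b' by rw [h]
        by_cases hbL : b ∈ P.support <;> by_cases hbL' : b' ∈ P.support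
        · rw [if_pos hbL, if_pos hbL'] at hxy
          by_cases hnb : nxt b ∈ Cs <;> by_cases hnb' : nxt b' ∈ Cs
          · rw [if_pos hnb, if_pos hnb'] at hxy
            have h1 := hgetinj _ _ (hidxv b hbL hbv) (hidxv b' hbL' hbv') hxy
            have h2 : P.support.idxOf b = P.support.idxOf b' := by omega
            rw [← hgetidx b hbL, ← hgetidx b' hbL', h2]
          · rw [if_pos hnb, if_neg hnb'] at hxy
            exact absurd hxy (hnxt_ne_u b hbL hbv)
          · rw [if_neg hnb, if_pos hnb'] at hxy
            exact absurd hxy.symm (hnxt_ne_u b' hbL' hbv')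
          · rw [if_neg hnb, if_neg hnb'] at hxy
            by_contra hbb'
            · have hne_idx : P.support.idxOf b ≠ P.support.idxOf b' := by
                intro h
                exact hbb' (by rw [← hgetidx b hbL, ← hgetidx b' hbL', h])
              rcases Nat.lt_or_ge (P.support.idxOf b) (P.support.idxOf b') with hlt | hge
              · exact exit_unique P hcross hlt
                  (by have := hidxv b' hbL' hbv'; omega)
                  (by rw [hgetidx b hbL]; exact hbCs) hnb
                  (by rw [hgetidx b' hbL']; exact hbCs') hnb'
              · have hlt : P.support.idxOf b' < P.support.idxOf b := by omega
                exact exit_unique P hcross hlt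
                  (by have := hidxv b hbL hbv; omega)
                  (by rw [hgetidx b' hbL']; exact hbCs') hnb'
                  (by rw [hgetidx b hbL]; exact hbCs) hnb
        · rw [if_pos hbL, if_neg hbL'] at hxy
          by_cases hnb : nxt b ∈ Cs
          · rw [if_pos hnb] at hxy
            exact absurd (hxy ▸ hnxt_mem b hbL hbv) hbL'
          · rw [if_neg hnb] at hxy
            exact absurd hxy.symm hbu'
        · rw [if_neg hbL, if_pos hbL'] at hxy
          by_cases hnb' : nxt b' ∈ Cs
          · rw [if_pos hnb'] at hxy
            exact absurd (hxy.symm ▸ hnxt_mem b' hbL' hbv') hbL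
          · rw [if_neg hnb'] at hxy
            exact absurd hxy hbu
        · rw [if_neg hbL, if_neg hbL'] at hxy
          exact hxy
  rw [hdegu, hdegv]
  omega

end Main

section Final

open SimpleGraph Walk

variable {V : Type*}

lemma cstep_preserves [Fintype V] {c : ℕ} {Cs : Set V} (hcard : Cs.ncard = c)
    {K K' : SimpleGraph V} (hstep : CStep c Cs K K')
    (LM : ∀ (w : V) (q : K.Walk w w), q.IsCycle →
      ¬ (c < q.length ∧ crossCount Cs q.edges ≤ 2)) :
    ∀ (w : V) (q : K'.Walk w w), q.IsCycle →
      ¬ (c < q.length ∧ crossCount Cs q.edges ≤ 2) := by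
  classical
  obtain ⟨u, v, hu, hv, hne, hnadj, hdeg, rfl⟩ := hstep
  rintro w q hq ⟨hlen, hcross⟩
  by_cases he : s(u, v) ∈ q.edges
  · have hWu : u ∈ q.support := q.fst_mem_support_of_mem_edges he
    have hq'c : (q.rotate u hWu).IsCycle := hq.rotate hWu
    have hperm : (q.rotate u hWu).edges.Perm q.edges := (q.rotate_edges u hWu).perm
    have he' : s(u, v) ∈ (q.rotate u hWu).edges := hperm.mem_iff.mpr he
    obtain ⟨P', hP'path, hPperm⟩ := extract_path hne (q.rotate u hWu) hq'c he'
    have hnodup : (s(u, v) :: P'.edges).Nodup :=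
      hPperm.nodup_iff.mp hq'c.isCircuit.isTrail.edges_nodup
    have hsuv : s(u, v) ∉ P'.edges := (List.nodup_cons.mp hnodup).1
    have hKe : ∀ e ∈ P'.edges, e ∈ K.edgeSet := by
      intro e hee
      have h1 : e ∈ (q.rotate u hWu).edges := hPperm.symm.subset (List.mem_cons_of_mem _ hee)
      have h2 := (q.rotate u hWu).edges_subset_edgeSet h1
      rw [edgeSet_sup, edgeSet_fromEdgeSet] at h2
      rcases h2 with h2 | ⟨h2, -⟩
      · exact h2
      · rw [Set.mem_singleton_iff] at h2
        exact absurd (h2 ▸ hee) hsuv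
    have hP₀path : (P'.transfer K hKe).IsPath := by
      rw [Walk.isPath_def, Walk.support_transfer]
      exact hP'path.support_nodup
    have hlen1 : (q.rotate u hWu).length = q.length := by
      have h0 := hperm.length_eq
      rwa [Walk.length_edges, Walk.length_edges] at h0
    have hlen2 : (q.rotate u hWu).length = P'.length + 1 := by
      have h0 := hPperm.length_eq
      rw [Walk.length_edges, List.length_cons, Walk.length_edges] at h0
      exact h0
    have hcross2 : crossCount Cs P'.edges ≤ 2 := by
      have h1 : crossCount Cs q.edges = crossCount Cs (s(u, v) :: P'.edges) :=
        crossCount_perm (hperm.symm.trans hPperm)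
      rw [crossCount_cons_of_not (not_crossEdge_of_mem hu hv)] at h1
      omega
    have hfinal := core_count hcard LM hu hv hne hnadj (P'.transfer K hKe).reverse
      hP₀path.reverse
      (by rw [Walk.length_reverse, Walk.length_transfer]; omega)
      (by rw [Walk.edges_reverse, crossCount_reverse, Walk.edges_transfer]; exact hcross2)
    omega
  · have hK : ∀ e ∈ q.edges, e ∈ K.edgeSet := by
      intro e hee
      have h1 := q.edges_subset_edgeSet hee
      rw [edgeSet_sup, edgeSet_fromEdgeSet] at h1
      rcases h1 with h1 | ⟨h1, -⟩
      · exact h1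
      · rw [Set.mem_singleton_iff] at h1
        exact absurd (h1 ▸ hee) he
    refine LM w (q.transfer K hK) (hq.transfer hK) ⟨?_, ?_⟩
    · rw [Walk.length_transfer]; exact hlen
    · rw [Walk.edges_transfer]; exact hcross

lemma support_ncard {G : SimpleGraph V} {v0 : V} {p : G.Walk v0 v0} (hp : p.IsCycle) :
    {x | x ∈ p.support}.ncard = p.length := by
  classical
  have h1 : v0 ∈ p.support.tail := by
    cases p with
    | nil => exact absurd rfl hp.ne_nil
    | cons h p' =>
      rw [Walk.support_cons, List.tail_cons]
      exact p'.end_mem_support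
  have h2 : {x | x ∈ p.support} = {x | x ∈ p.support.tail} := by
    ext x
    simp only [Set.mem_setOf_eq]
    constructor
    · intro hx
      rw [Walk.support_eq_cons, List.mem_cons] at hx
      rcases hx with rfl | hx
      · exact h1
      · exact hx
    · intro hx
      rw [Walk.support_eq_cons]
      exact List.mem_cons_of_mem _ hx
  have h3 : {x | x ∈ p.support.tail} = (p.support.tail.toFinset : Set V) := by
    ext x; simp
  rw [h2, h3, Set.ncard_coe_finset, List.toFinset_card_of_nodup hp.support_nodup,
    List.length_tail, Walk.length_support]
  omega

end Final

/-- A locally maximal cycle of `G` remains locally maximal in the `C`-closure of `G`. -/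
theorem stmt15 {V : Type*} [Fintype V] (G H : SimpleGraph V)
    (v0 : V) (p : G.Walk v0 v0) (hC : IsLocallyMaximal G p)
    (hH : IsCClosure G p H) (hle : G ≤ H) :
    IsLocallyMaximal H (p.mapLe hle) := by
  classical
  have hcard : {x | x ∈ p.support}.ncard = p.length := support_ncard hC.1
  have LMall : ∀ (K : SimpleGraph V),
      Relation.ReflTransGen (CStep p.length {x | x ∈ p.support}) G K →
      ∀ (w : V) (q : K.Walk w w), q.IsCycle →
        ¬ (p.length < q.length ∧ crossCount {x | x ∈ p.support} q.edges ≤ 2) := by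
    intro K h
    induction h with
    | refl => exact hC.2
    | tail _ hstep ih => exact cstep_preserves hcard hstep ih
  have LMH := LMall H hH.1
  constructor
  · exact (Walk.mapLe_isCycle hle).mpr hC.1
  · intro w q hq hcontra
    obtain ⟨h1, h2⟩ := hcontra
    have hsupp : (p.mapLe hle).support = p.support := by
      rw [Walk.support_mapLe_eq_support]
    have hlen' : (p.mapLe hle).length = p.length := by simp
    exact LMH w q hq ⟨by rwa [hlen'] at h1, by rwa [hsupp] at h2⟩
end

section
/- Let G be a 2-connected graph on n vertices and C a locally maximal cycle in G of length c ≤ n-1. Then the C-closure of G restricted to V(C) is not Hamiltonian-connected. -/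
open SimpleGraph

section Aux
open SimpleGraph List

variable {V : Type*} {G : SimpleGraph V} {Cs : Set V}

/-- Build a walk from a chain of adjacent vertices. -/
def walkOfChain : (l : List V) → (hne : l ≠ []) → (h : l.Chain' G.Adj) →
    G.Walk (l.head hne) (l.getLast hne)
  | [_], _, _ => SimpleGraph.Walk.nil
  | _ :: b :: t, _, h => by
      refine SimpleGraph.Walk.cons (h.rel_head)
        ((walkOfChain (b :: t) (by simp) h.tail).copy rfl ?_)
      simp [List.getLast_cons]

@[simp] lemma support_walkOfChain : ∀ (l : List V) (hne : l ≠ []) (h : l.Chain' G.Adj),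
    (walkOfChain l hne h : G.Walk _ _).support = l
  | [_], _, _ => rfl
  | _ :: b :: t, _, h => by
      simp [walkOfChain]
      exact support_walkOfChain (b :: t) (by simp) h.tail

lemma chain'_iff_getD {α : Type*} (R : α → α → Prop) (l : List α) (d : α) :
    l.Chain' R ↔ ∀ i, i + 1 < l.length → R (l.getD i d) (l.getD (i+1) d) := by
  rw [List.Chain', List.isChain_iff_getElem]
  constructor
  · intro h i hi
    rw [List.getD_eq_getElem l d (by omega), List.getD_eq_getElem l d hi]
    simpa using h i (by omega)
  · intro h i hi
    have := h i (by omega)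
    rw [List.getD_eq_getElem l d (by omega), List.getD_eq_getElem l d (by omega)] at this
    simpa using this

lemma exists_swap_index {W : Type*} [DecidableEq W] (K : SimpleGraph W)
    (l : List W) (d : W) (hnd : l.Nodup) (hcov : ∀ w : W, w ∈ l)
    {u v : W} {k : ℕ} (hk1 : 1 ≤ k) (hk2 : k < l.length)
    (hu : l.getD (k-1) d = u) (hv : l.getD k d = v)
    (hdeg : l.length + 1 ≤ (K.neighborSet u).ncard + (K.neighborSet v).ncard) :
    ∃ j, j + 1 < l.length ∧ K.Adj u (l.getD j d) ∧ K.Adj v (l.getD (j+1) d) := by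
  classical
  by_contra hno
  push_neg at hno
  set m := l.length with hm
  have hfin : ∀ w : W, (K.neighborSet w).Finite := by
    intro w
    apply Set.Finite.subset (List.finite_toSet l)
    intro z _
    exact hcov z
  have hcardS : ∀ w : W, ((Finset.range m).filter (fun j => K.Adj w (l.getD j d))).card
      = (K.neighborSet w).ncard := by
    intro w
    haveI := (hfin w).fintype
    rw [Set.ncard_eq_toFinset_card']
    apply Finset.card_bij (fun j _ => l.getD j d)
    · intro a ha
      simp only [Finset.mem_filter, Finset.mem_range] at ha
      simp only [Set.mem_toFinset, SimpleGraph.mem_neighborSet]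
      exact ha.2
    · intro a ha b hb hab
      simp only [Finset.mem_filter, Finset.mem_range] at ha hb
      rw [List.getD_eq_getElem l d ha.1, List.getD_eq_getElem l d hb.1] at hab
      exact (hnd.getElem_inj_iff).1 hab
    · intro b hb
      have hbmem : b ∈ l := hcov b
      have hlt : List.idxOf b l < m := List.idxOf_lt_length_iff.2 hbmem
      refine ⟨List.idxOf b l, ?_, ?_⟩
      · simp only [Finset.mem_filter, Finset.mem_range]
        refine ⟨hlt, ?_⟩
        rw [List.getD_eq_getElem l d hlt, List.getElem_idxOf hlt]
        simpa using hb
      · rw [List.getD_eq_getElem l d hlt, List.getElem_idxOf hlt]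
  set S := (Finset.range m).filter (fun j => K.Adj u (l.getD j d)) with hSdef
  set T := (Finset.range m).filter (fun j => K.Adj v (l.getD j d)) with hTdef
  have hdisj : Disjoint ((S.erase (m-1)).image (· + 1)) T := by
    rw [Finset.disjoint_left]
    intro t ht ht'
    simp only [Finset.mem_image, Finset.mem_erase, hSdef, Finset.mem_filter,
      Finset.mem_range] at ht
    obtain ⟨j, ⟨hj1, hj2, hj3⟩, rfl⟩ := ht
    simp only [hTdef, Finset.mem_filter, Finset.mem_range] at ht'
    exact hno j ht'.1 hj3 ht'.2
  have hsub : ((S.erase (m-1)).image (· + 1)) ∪ T ⊆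
      ((Finset.range (m+1)).erase m).erase k := by
    intro t ht
    simp only [Finset.mem_union, Finset.mem_image, Finset.mem_erase, hSdef, hTdef,
      Finset.mem_filter, Finset.mem_range] at ht
    simp only [Finset.mem_erase, Finset.mem_range]
    rcases ht with ⟨j, ⟨hj1, hj2, hj3⟩, rfl⟩ | ⟨ht1, ht2⟩
    · refine ⟨?_, by omega, by omega⟩
      intro hjk
      have hj : j = k - 1 := by omega
      subst hj
      rw [hu] at hj3
      exact K.irrefl hj3
    · refine ⟨?_, by omega, by omega⟩
      intro htk
      subst htk
      rw [hv] at ht2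
      exact K.irrefl ht2
  have hcard2 : (((S.erase (m-1)).image (· + 1)) ∪ T).card =
      (S.erase (m-1)).card + T.card := by
    rw [Finset.card_union_of_disjoint hdisj,
      Finset.card_image_of_injective _ (fun a b h => by omega)]
  have hle : (((S.erase (m-1)).image (· + 1)) ∪ T).card ≤ m - 1 := by
    refine le_trans (Finset.card_le_card hsub) ?_
    rw [Finset.card_erase_of_mem, Finset.card_erase_of_mem] <;>
      simp [Finset.mem_erase, Finset.mem_range] <;> omega
  have h1 : S.card - 1 ≤ (S.erase (m-1)).card := Finset.pred_card_le_card_erase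
  have hSc := hcardS u
  have hTc := hcardS v
  rw [← hSdef] at hSc
  rw [← hTdef] at hTc
  omega


lemma surgery {W : Type*} {K : SimpleGraph W} (l : List W) (d : W)
    {a b : ℕ} (ha : 1 ≤ a) (hab : a < b) (hb : b < l.length)
    (hpairs : ∀ i, i + 1 < l.length → i + 1 ≠ a → i + 1 ≠ b →
      K.Adj (l.getD i d) (l.getD (i+1) d))
    (h1 : K.Adj (l.getD (a-1) d) (l.getD (b-1) d))
    (h2 : K.Adj (l.getD a d) (l.getD b d)) :
    ∃ l' : List W, l'.Chain' K.Adj ∧ l' ~ l ∧ l'.head? = l.head? ∧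
      l'.getLast? = l.getLast? := by
  set mid := (l.drop a).take (b-a) with hmid
  set l' := l.take a ++ (mid.reverse ++ l.drop b) with hl'
  have hlt : (l.take a).length = a := by rw [List.length_take]; omega
  have hlm : mid.length = b - a := by
    rw [hmid, List.length_take, List.length_drop]; omega
  have hld : (l.drop b).length = l.length - b := List.length_drop
  -- getD facts via getElem?
  have hmidget : ∀ i, i < b - a → mid.getD i d = l.getD (a+i) d := by
    intro i h
    rw [List.getD_eq_getElem?_getD, List.getD_eq_getElem?_getD, hmid,
      List.getElem?_take, if_pos h, List.getElem?_drop]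
  have htakeget : ∀ i, i < a → (l.take a).getD i d = l.getD i d := by
    intro i h
    rw [List.getD_eq_getElem?_getD, List.getD_eq_getElem?_getD, List.getElem?_take, if_pos h]
  have hrevget : ∀ i, i < b - a → mid.reverse.getD i d = l.getD (b-1-i) d := by
    intro i h
    rw [List.getD_eq_getElem?_getD, List.getElem?_reverse (by omega), hlm,
      ← List.getD_eq_getElem?_getD, hmidget _ (by omega)]
    congr 1
    omega
  have hdropget : ∀ i, (l.drop b).getD i d = l.getD (b+i) d := by
    intro i
    rw [List.getD_eq_getElem?_getD, List.getD_eq_getElem?_getD, List.getElem?_drop]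
  -- chain pieces
  have hchain_take : (l.take a).Chain' K.Adj := by
    rw [chain'_iff_getD _ _ d]
    intro i hi
    rw [hlt] at hi
    rw [htakeget i (by omega), htakeget (i+1) (by omega)]
    exact hpairs i (by omega) (by omega) (by omega)
  have hchain_rev : mid.reverse.Chain' K.Adj := by
    rw [chain'_iff_getD _ _ d]
    intro i hi
    simp only [List.length_reverse, hlm] at hi
    rw [hrevget i (by omega), hrevget (i+1) (by omega)]
    have := hpairs (b-1-(i+1)) (by omega) (by omega) (by omega)
    have heq : b - 1 - (i+1) + 1 = b - 1 - i := by omega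
    rw [heq] at this
    exact this.symm
  have hchain_drop : (l.drop b).Chain' K.Adj := by
    rw [chain'_iff_getD _ _ d]
    intro i hi
    rw [hld] at hi
    rw [hdropget i, hdropget (i+1)]
    have := hpairs (b+i) (by omega) (by omega) (by omega)
    simpa [Nat.add_assoc] using this
  -- endpoint option values
  have hlast_take : (l.take a).getLast? = some (l.getD (a-1) d) := by
    rw [List.getLast?_eq_getElem?, hlt, List.getElem?_take, if_pos (by omega),
      List.getElem?_eq_getElem (by omega), List.getD_eq_getElem l d (by omega)]
  have hhead_rev : mid.reverse.head? = some (l.getD (b-1) d) := by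
    have h0 : (0:ℕ) < b - a := by omega
    rw [List.head?_eq_getElem?, List.getElem?_eq_getElem (by simp [hlm]; omega)]
    have := hrevget 0 h0
    rw [List.getD_eq_getElem _ d (by simp [hlm]; omega), List.getD_eq_getElem l d (by omega)] at this
    rw [this]
    simp only [Nat.sub_zero]
    rw [List.getD_eq_getElem l d (by omega)]
  have hlast_rev : mid.reverse.getLast? = some (l.getD a d) := by
    have hbound : b - a - 1 < b - a := by omega
    rw [List.getLast?_eq_getElem?, List.length_reverse, hlm,
      List.getElem?_eq_getElem (by simp [hlm]; omega)]
    have := hrevget (b-a-1) hbound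
    rw [List.getD_eq_getElem _ d (by simp [hlm]; omega),
      List.getD_eq_getElem l d (by omega)] at this
    rw [this]
    have : b - 1 - (b - a - 1) = a := by omega
    simp only [this]
    rw [← List.getD_eq_getElem l d (by omega)]
  have hhead_drop : (l.drop b).head? = some (l.getD b d) := by
    rw [List.head?_eq_getElem?, List.getElem?_eq_getElem (by omega)]
    have := hdropget 0
    rw [List.getD_eq_getElem _ d (by omega), List.getD_eq_getElem l d (by omega)] at this
    rw [this]
    simp only [Nat.add_zero]
    rw [List.getD_eq_getElem l d (by omega)]
  refine ⟨l', ?_, ?_, ?_, ?_⟩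
  · rw [hl', List.Chain', List.isChain_append]
    refine ⟨hchain_take, ?_, ?_⟩
    · rw [List.isChain_append]
      refine ⟨hchain_rev, hchain_drop, ?_⟩
      intro x hx y hy
      rw [hlast_rev] at hx
      rw [hhead_drop] at hy
      simp only [Option.mem_def, Option.some.injEq] at hx hy
      subst hx; subst hy
      exact h2
    · intro x hx y hy
      rw [hlast_take] at hx
      rw [List.head?_append, hhead_rev] at hy
      simp only [Option.mem_def, Option.some.injEq, Option.or] at hx hy
      subst hx; subst hy
      exact h1
  · rw [hl']
    calc l.take a ++ (mid.reverse ++ l.drop b)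
        ~ l.take a ++ (mid ++ l.drop b) :=
          List.Perm.append_left _ (List.Perm.append_right _ mid.reverse_perm)
      _ = (l.take a ++ mid) ++ l.drop b := by rw [List.append_assoc]
      _ = l.take b ++ l.drop b := by
          have hba : a + (b - a) = b := by omega
          rw [hmid, ← List.take_add, hba]
      _ = l := List.take_append_drop b l
  · have htk : (l.take a).head? = l.head? := by
      rw [List.head?_eq_getElem?, List.head?_eq_getElem?, List.getElem?_take,
        if_pos (show 0 < a by omega)]
    have hne : l ≠ [] := by intro h; subst h; simp at hb
    obtain ⟨x0, hx0⟩ := Option.isSome_iff_exists.1 (List.isSome_head?.2 hne)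
    rw [hl', List.head?_append, htk, hx0]
    rfl
  · have hdl : (l.drop b).getLast? = l.getLast? := by
      rw [List.getLast?_eq_getElem?, List.getLast?_eq_getElem?, hld, List.getElem?_drop]
      congr 1
      omega
    have hdne : l.drop b ≠ [] := by
      intro h
      have := congrArg List.length h
      simp only [hld, List.length_nil] at this
      omega
    obtain ⟨z, hz⟩ := Option.isSome_iff_exists.1 (List.getLast?_isSome.2 hdne)
    rw [hl', List.getLast?_append, List.getLast?_append, hz, ← hdl, hz]
    rfl


/-- Build a Hamiltonian walk from a Hamiltonian list. -/
lemma ham_walk_of_list {W : Type*} [DecidableEq W] {K : SimpleGraph W} {s t : W}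
    (l : List W) (hch : l.Chain' K.Adj) (hnd : l.Nodup) (hcov : ∀ w : W, w ∈ l)
    (hh : l.head? = some s) (hl : l.getLast? = some t) :
    ∃ P : K.Walk s t, P.IsHamiltonian := by
  have hne : l ≠ [] := by rintro rfl; simp at hh
  have hs : l.head hne = s := by rw [List.head?_eq_head hne] at hh; exact Option.some_injective _ hh
  have ht : l.getLast hne = t := by
    rw [List.getLast?_eq_getLast hne] at hl; exact Option.some_injective _ hl
  refine ⟨(walkOfChain l hne hch).copy hs ht, ?_⟩
  intro w
  have : ((walkOfChain l hne hch).copy hs ht).support = l := by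
    rw [SimpleGraph.Walk.support_copy, support_walkOfChain]
  rw [this]
  exact List.count_eq_one_of_mem hnd (hcov w)

lemma hamConn_of_cstep {W : Type*} [Fintype W] [DecidableEq W] {K : SimpleGraph W} {x y : W}
    (hxy : x ≠ y) (hnadj : ¬ K.Adj x y)
    (hdeg : Fintype.card W + 1 ≤ (K.neighborSet x).ncard + (K.neighborSet y).ncard)
    (h : HamConn (K ⊔ SimpleGraph.fromEdgeSet {s(x,y)})) : HamConn K := by
  intro s t hst
  obtain ⟨P, hP⟩ := h s t hst
  set l := P.support with hldef
  have hnd : l.Nodup := List.nodup_iff_count_le_one.2 fun a => (hP a).le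
  have hcov : ∀ w : W, w ∈ l := fun w => List.count_pos_iff.1 (by rw [hP w]; norm_num)
  have hne : l ≠ [] := P.support_ne_nil
  have hlen : l.length = Fintype.card W := by
    rw [← List.toFinset_card_of_nodup hnd]
    have : l.toFinset = Finset.univ := Finset.eq_univ_iff_forall.2 fun w => List.mem_toFinset.2 (hcov w)
    rw [this, Finset.card_univ]
  have hh : l.head? = some s := by rw [hldef, P.support_eq_cons]; rfl
  have hlast : l.getLast? = some t := by
    show P.support.getLast? = some t
    rw [List.getLast?_eq_getLast P.support_ne_nil]
    exact congrArg some P.getLast_support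
  have hchain' : l.Chain' (K ⊔ SimpleGraph.fromEdgeSet {s(x,y)}).Adj := P.isChain_adj_support
  by_cases hch : l.Chain' K.Adj
  · exact ham_walk_of_list l hch hnd hcov hh hlast
  · rw [chain'_iff_getD _ _ s] at hch
    push_neg at hch
    obtain ⟨i, hi, hbad⟩ := hch
    have hKadj := (chain'_iff_getD _ _ s).1 hchain' i hi
    have hpair : (l.getD i s = x ∧ l.getD (i+1) s = y) ∨
        (l.getD i s = y ∧ l.getD (i+1) s = x) := by
      simp only [SimpleGraph.sup_adj, SimpleGraph.fromEdgeSet_adj, Set.mem_singleton_iff,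
        Sym2.eq_iff] at hKadj
      rcases hKadj with h' | ⟨h', _⟩
      · exact absurd h' hbad
      · tauto
    set u := l.getD i s with hudef
    set v := l.getD (i+1) s with hvdef
    have huv : u ≠ v := by
      rcases hpair with ⟨h1, h2⟩ | ⟨h1, h2⟩ <;> rw [h1, h2] <;> [exact hxy; exact hxy.symm]
    have hnadj' : ¬ K.Adj u v := hbad
    have hdeg' : l.length + 1 ≤ (K.neighborSet u).ncard + (K.neighborSet v).ncard := by
      rw [hlen]
      rcases hpair with ⟨h1, h2⟩ | ⟨h1, h2⟩ <;> rw [h1, h2] <;> omega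
    have hk1 : 1 ≤ i + 1 := by omega
    have hk2 : i + 1 < l.length := hi
    obtain ⟨j, hj, hju, hjv⟩ := exists_swap_index K l s hnd hcov (k := i+1) hk1 hk2
      (by simp [hudef]) rfl hdeg'
    -- getD injectivity helper
    have hgetDinj : ∀ j1 j2, j1 < l.length → j2 < l.length →
        l.getD j1 s = l.getD j2 s → j1 = j2 := by
      intro j1 j2 h1 h2 he
      rw [List.getD_eq_getElem l s h1, List.getD_eq_getElem l s h2] at he
      exact hnd.getElem_inj_iff.1 he
    have hj_ne_k : j ≠ i + 1 := by
      intro hjk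
      subst hjk
      exact hnadj' hju
    have hj_ne_km1 : j ≠ i := by
      intro hjk
      subst hjk
      rw [← hudef] at hju
      exact K.irrefl hju
    have hj1_ne_km1 : j + 1 ≠ i := by
      intro hjk
      rw [hjk, ← hudef] at hjv
      exact hnadj' hjv.symm
    have hKpairs : ∀ i', i' + 1 < l.length → i' + 1 ≠ i + 1 →
        K.Adj (l.getD i' s) (l.getD (i'+1) s) := by
      intro i' hi' hne'
      have hKadj' := (chain'_iff_getD _ _ s).1 hchain' i' hi'
      simp only [SimpleGraph.sup_adj, SimpleGraph.fromEdgeSet_adj, Set.mem_singleton_iff,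
        Sym2.eq_iff] at hKadj'
      rcases hKadj' with h' | ⟨h', hne''⟩
      · exact h'
      rcases hpair with ⟨h1, h2⟩ | ⟨h1, h2⟩ <;> rcases h' with ⟨ha', hb'⟩ | ⟨ha', hb'⟩
      · exfalso
        exact hne' (by rw [hgetDinj i' i (by omega) (by omega) (ha'.trans (h1.symm.trans hudef))])
      · exfalso
        have e1 : i' = i + 1 := hgetDinj i' (i+1) (by omega) (by omega)
          (ha'.trans (h2.symm.trans hvdef))
        have e2 : i' + 1 = i := hgetDinj (i'+1) i (by omega) (by omega)
          (hb'.trans (h1.symm.trans hudef))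
        omega
      · exfalso
        have e1 : i' = i + 1 := hgetDinj i' (i+1) (by omega) (by omega)
          (ha'.trans (h2.symm.trans hvdef))
        have e2 : i' + 1 = i := hgetDinj (i'+1) i (by omega) (by omega)
          (hb'.trans (h1.symm.trans hudef))
        omega
      · exfalso
        exact hne' (by rw [hgetDinj i' i (by omega) (by omega) (ha'.trans (h1.symm.trans hudef))])
    have hcases : j + 1 < i ∨ i + 1 < j := by omega
    have hout : ∃ l' : List W, l'.Chain' K.Adj ∧ l' ~ l ∧ l'.head? = l.head? ∧
        l'.getLast? = l.getLast? := by
      rcases hcases with hlt | hgt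
      · refine surgery l s (a := j+1) (b := i+1) (by omega) (by omega) (by omega) ?_ ?_ ?_
        · intro i' hi' _ hne2
          exact hKpairs i' hi' hne2
        · exact hju.symm
        · exact hjv.symm
      · refine surgery l s (a := i+1) (b := j+1) (by omega) (by omega) (by omega) ?_ ?_ ?_
        · intro i' hi' hne2 _
          exact hKpairs i' hi' hne2
        · exact hju
        · exact hjv
    obtain ⟨l', hch', hperm, hh', hl'⟩ := hout
    exact ham_walk_of_list l' hch' (hperm.nodup_iff.2 hnd)
      (fun w => hperm.mem_iff.2 (hcov w)) (hh'.trans hh) (hl'.trans hlast)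


lemma degIn_eq (G : SimpleGraph V) (Cs : Set V) (u : V) (hu : u ∈ Cs) :
    degIn G Cs u = ((G.induce Cs).neighborSet ⟨u, hu⟩).ncard := by
  have himg : (Subtype.val '' ((G.induce Cs).neighborSet ⟨u, hu⟩)) =
      G.neighborSet u ∩ Cs := by
    ext z
    simp only [Set.mem_image, SimpleGraph.mem_neighborSet, comap_adj, Function.Embedding.coe_subtype,
      Set.mem_inter_iff]
    constructor
    · rintro ⟨⟨z', hz'⟩, hadj, rfl⟩
      exact ⟨hadj, hz'⟩
    · rintro ⟨hadj, hz⟩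
      exact ⟨⟨z, hz⟩, hadj, rfl⟩
  rw [degIn, ← himg, Set.ncard_image_of_injective _ Subtype.val_injective]

lemma induce_sup_edge (G : SimpleGraph V) (Cs : Set V) (u v : V) (hu : u ∈ Cs) (hv : v ∈ Cs) :
    (G ⊔ SimpleGraph.fromEdgeSet {s(u,v)}).induce Cs =
      (G.induce Cs) ⊔ SimpleGraph.fromEdgeSet {s((⟨u,hu⟩ : Cs), ⟨v,hv⟩)} := by
  ext a b
  simp only [comap_adj, Function.Embedding.coe_subtype, sup_adj, fromEdgeSet_adj,
    Set.mem_singleton_iff, Sym2.eq_iff, Subtype.ext_iff, ne_eq]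

lemma hamConn_descend [DecidableEq V] {c : ℕ} {Cs : Set V} [Fintype ↥Cs]
    (hcard : Fintype.card ↥Cs ≤ c) {G H : SimpleGraph V}
    (hrel : Relation.ReflTransGen (CStep c Cs) G H)
    (hH : HamConn (H.induce Cs)) : HamConn (G.induce Cs) := by
  induction hrel using Relation.ReflTransGen.head_induction_on with
  | refl => exact hH
  | @head a b hstep hrest ih =>
      obtain ⟨u, v, hu, hv, huv, hnadj, hdeg, rfl⟩ := hstep
      rw [induce_sup_edge a Cs u v hu hv] at ih
      refine hamConn_of_cstep (x := (⟨u,hu⟩ : Cs)) (y := ⟨v,hv⟩) ?_ ?_ ?_ ih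
      · exact fun he => huv (Subtype.ext_iff.1 he)
      · simpa using hnadj
      · rw [← degIn_eq a Cs u hu, ← degIn_eq a Cs v hv]
        omega


lemma not_crossEdge_of_both_out {a b : V} (ha : a ∉ Cs) (hb : b ∉ Cs) :
    ¬ crossEdge Cs s(a, b) := by
  rintro ⟨⟨z, hz, hzc⟩, -⟩
  rw [Sym2.mem_iff] at hz
  rcases hz with rfl | rfl
  · exact ha hzc
  · exact hb hzc

lemma not_crossEdge_of_both_in {a b : V} (ha : a ∈ Cs) (hb : b ∈ Cs) :
    ¬ crossEdge Cs s(a, b) := by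
  rintro ⟨-, ⟨z, hz, hzc⟩⟩
  rw [Sym2.mem_iff] at hz
  rcases hz with rfl | rfl
  · exact hzc ha
  · exact hzc hb

lemma nil_of_nodup_loop {t : V} (Q : G.Walk t t) (hnd : Q.support.Nodup) : Q = Walk.nil := by
  cases Q with
  | nil => rfl
  | cons h Q' =>
      exfalso
      set Q := SimpleGraph.Walk.cons h Q' with hQ
      have h2 : Q.support = t :: Q.support.tail := Q.support_eq_cons
      have hlast : Q.support.getLast? = some t := by
        rw [List.getLast?_eq_getLast Q.support_ne_nil]
        exact congrArg some Q.getLast_support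
      have htail_ne : Q.support.tail ≠ [] := by
        intro hcon
        have h1 : Q.support.length = Q.length + 1 := Q.length_support
        rw [h2, hcon] at h1
        have hQl : Q.length = Q'.length + 1 := by rw [hQ]; simp
        simp only [List.length_cons, List.length_nil] at h1
        omega
      obtain ⟨b, l', htl⟩ := List.exists_cons_of_ne_nil htail_ne
      have hlast2 : (b :: l').getLast? = some t := by
        rw [← hlast, h2, htl, List.getLast?_cons_cons]
      obtain ⟨ys, hys⟩ := List.getLast?_eq_some_iff.1 hlast2
      have hmem : t ∈ Q.support.tail := by rw [htl, hys]; simp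
      have hnd2 := hnd
      rw [h2] at hnd2
      exact (List.nodup_cons.1 hnd2).1 hmem

lemma crossCount_le_one : ∀ {u t : V} (Q : G.Walk u t), Q.support.Nodup → u ∉ Cs →
    (∀ z ∈ Q.support, z ∈ Cs → z = t) → crossCount Cs Q.edges ≤ 1 := by
  classical
  intro u t Q
  induction Q with
  | nil => intro _ _ _; simp [crossCount]
  | @cons a z t h Q' ih =>
      intro hnd ha hprop
      rw [SimpleGraph.Walk.support_cons] at hnd hprop
      rw [SimpleGraph.Walk.edges_cons]
      rw [crossCount, List.countP_cons]
      by_cases hz : z ∈ Cs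
      · have hzt : z = t := hprop z (by simp [Walk.start_mem_support]) hz
        subst hzt
        have : Q' = Walk.nil := nil_of_nodup_loop Q' hnd.of_cons
        subst this
        simp only [SimpleGraph.Walk.edges_nil, List.countP_nil]
        split <;> omega
      · have h1 : crossCount Cs Q'.edges ≤ 1 := by
          apply ih hnd.of_cons hz
          intro z' hz' hz''
          exact hprop z' (List.mem_cons_of_mem _ hz') hz''
        have h2 : ¬ crossEdge Cs s(a, z) := not_crossEdge_of_both_out ha hz
        rw [crossCount] at h1
        simp only [decide_eq_true_eq, h2, if_false]
        omega

lemma crossCount_le_two {x y : V} (Q : G.Walk x y)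
    (hnd : Q.support.Nodup) (hprop : ∀ z ∈ Q.support, z ∈ Cs → z = x ∨ z = y) :
    crossCount Cs Q.edges ≤ 2 := by
  classical
  cases Q with
  | nil => simp [crossCount]
  | @cons _ z _ h Q' =>
      rw [SimpleGraph.Walk.support_cons] at hnd hprop
      rw [SimpleGraph.Walk.edges_cons, crossCount, List.countP_cons]
      have hrest : crossCount Cs Q'.edges ≤ 1 := by
        by_cases hz : z ∈ Cs
        · have : z = x ∨ z = y := hprop z (by simp [Walk.start_mem_support]) hz
          rcases this with rfl | rfl
          · exact absurd rfl h.ne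
          · have : Q' = Walk.nil := nil_of_nodup_loop Q' hnd.of_cons
            subst this
            simp [crossCount]
        · apply crossCount_le_one Q' hnd.of_cons hz
          intro z' hz' hz''
          rcases hprop z' (List.mem_cons_of_mem _ hz') hz'' with rfl | rfl
          · exfalso
            exact (List.nodup_cons.1 hnd).1 hz'
          · rfl
      rw [crossCount] at hrest
      have : (if decide (crossEdge Cs s(x, z)) = true then 1 else 0) ≤ 1 := by
        split <;> omega
      omega


lemma exists_first_hit (Cs : Set V) :
    ∀ {w t : V} (_Q : G.Walk w t), w ∉ Cs → t ∈ Cs →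
    ∃ (x : V) (_ : x ∈ Cs) (R : G.Walk w x), ∀ z ∈ R.support, z ∈ Cs → z = x := by
  intro w t Q
  induction Q with
  | nil => intro hw ht; exact absurd ht hw
  | @cons a z t h Q' ih =>
      intro hw ht
      by_cases hz : z ∈ Cs
      · refine ⟨z, hz, Walk.cons h Walk.nil, ?_⟩
        intro z' hz' hz''
        simp only [Walk.support_cons, Walk.support_nil, List.mem_cons, List.mem_singleton,
          List.not_mem_nil, or_false] at hz'
        rcases hz' with rfl | rfl
        · exact absurd hz'' hw
        · rfl
      · obtain ⟨x, hx, R, hR⟩ := ih hz ht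
        refine ⟨x, hx, Walk.cons h R, ?_⟩
        intro z' hz' hz''
        rw [Walk.support_cons] at hz'
        rcases List.mem_cons.1 hz' with rfl | h'
        · exact absurd hz'' hw
        · exact hR z' h' hz''

lemma preconnected_of_twoConnected [Fintype V] (hG : TwoConnected G) : G.Preconnected := by
  classical
  intro a b
  by_cases hab : a = b
  · subst hab; exact SimpleGraph.Reachable.refl a
  · obtain ⟨v', hv'⟩ : ∃ v', v' ∉ ({a, b} : Finset V) := by
      by_contra hcon
      push_neg at hcon
      have hsub : (Finset.univ : Finset V) ⊆ {a, b} := fun x _ => hcon x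
      have h1 := Finset.card_le_card hsub
      rw [Finset.card_univ] at h1
      have h2 : ({a, b} : Finset V).card ≤ 2 := Finset.card_insert_le a {b}
      have := hG.1
      omega
    simp only [Finset.mem_insert, Finset.mem_singleton, not_or] at hv'
    obtain ⟨ha', hb'⟩ := hv'
    have hconn := hG.2 v'
    have haV : a ∈ ((⊤ : G.Subgraph).deleteVerts {v'}).verts := by
      simp only [Subgraph.deleteVerts_verts, Subgraph.verts_top, Set.mem_diff,
        Set.mem_univ, Set.mem_singleton_iff, true_and]
      exact fun h => ha' (h ▸ rfl)
    have hbV : b ∈ ((⊤ : G.Subgraph).deleteVerts {v'}).verts := by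
      simp only [Subgraph.deleteVerts_verts, Subgraph.verts_top, Set.mem_diff,
        Set.mem_univ, Set.mem_singleton_iff, true_and]
      exact fun h => hb' (h ▸ rfl)
    have hreach := hconn.preconnected ⟨a, haV⟩ ⟨b, hbV⟩
    have := hreach.map (Subgraph.hom _)
    simpa using this

lemma end_mem_support_tail {u v : V} (Q : G.Walk u v) (hne : Q.support.tail ≠ []) :
    v ∈ Q.support.tail := by
  have h2 : Q.support = u :: Q.support.tail := Q.support_eq_cons
  have hlast : Q.support.getLast? = some v := by
    rw [List.getLast?_eq_getLast Q.support_ne_nil]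
    exact congrArg some Q.getLast_support
  obtain ⟨b, l', htl⟩ := List.exists_cons_of_ne_nil hne
  have hlast2 : (b :: l').getLast? = some v := by
    rw [← hlast, h2, htl, List.getLast?_cons_cons]
  obtain ⟨ys, hys⟩ := List.getLast?_eq_some_iff.1 hlast2
  rw [htl, hys]
  simp

lemma edges_out {u t : V} {x0 : V} (P : G.Walk u t)
    (hprop : ∀ z ∈ P.support, z ∈ Cs → z = x0) :
    ∀ e ∈ P.edges, ∃ a ∈ e, a ∉ Cs := by
  intro e he
  induction e with
  | h a b =>
      by_cases ha : a ∈ Cs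
      · by_cases hb : b ∈ Cs
        · exfalso
          have hadj : G.Adj a b := P.adj_of_mem_edges he
          have h1 : a = x0 := hprop a (P.fst_mem_support_of_mem_edges he) ha
          have h2 : b = x0 := hprop b (P.snd_mem_support_of_mem_edges he) hb
          exact hadj.ne (h1.trans h2.symm)
        · exact ⟨b, Sym2.mem_mk_right _ _, hb⟩
      · exact ⟨a, Sym2.mem_mk_left _ _, ha⟩

def inducedHom (G : SimpleGraph V) (Cs : Set V) : G.induce Cs →g G :=
  ⟨Subtype.val, fun {a b} h => h⟩

lemma two_le_length_of_edges_out {x y : V} (Q : G.Walk x y) (hxy : x ≠ y)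
    (hx : x ∈ Cs) (hy : y ∈ Cs) (hedges : ∀ e ∈ Q.edges, ∃ a ∈ e, a ∉ Cs) :
    2 ≤ Q.length := by
  cases Q with
  | nil => exact absurd rfl hxy
  | @cons _ z _ h Q' =>
      by_contra hlt
      push_neg at hlt
      have hlen : Q'.length = 0 := by
        have := SimpleGraph.Walk.length_cons h Q'
        omega
      have hz : z = y := SimpleGraph.Walk.eq_of_length_eq_zero hlen
      subst hz
      obtain ⟨a, ha, hout⟩ := hedges s(x, z)
        (by rw [SimpleGraph.Walk.edges_cons]; exact List.mem_cons_self)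
      rcases Sym2.mem_iff.1 ha with rfl | rfl
      · exact hout hx
      · exact hout hy


end Aux

/-- If `G` is 2-connected on `n` vertices and `C` is a locally maximal cycle of length
`c ≤ n-1`, then the `C`-closure of `G` restricted to `V(C)` is not
Hamiltonian-connected. -/
theorem stmt16 {V : Type*} [Fintype V] [DecidableEq V] (G H : SimpleGraph V) (n c : ℕ)
    (hn : Fintype.card V = n) (hG : TwoConnected G)
    (v0 : V) (p : G.Walk v0 v0) (hC : IsLocallyMaximal G p) (hc : p.length = c)
    (hcn : c ≤ n - 1) (hH : IsCClosure G p H) :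
    ¬ HamConn (H.induce {x | x ∈ p.support}) := by
  classical
  intro hHam
  obtain ⟨hrel, -⟩ := hH
  obtain ⟨hcyc, hmax⟩ := hC
  subst hc
  subst hn
  set Cs : Set V := {x | x ∈ p.support} with hCsdef
  haveI : Fintype ↥Cs := Fintype.ofFinite _
  set c := p.length with hcdef
  have hc3 : 3 ≤ c := hcyc.three_le_length
  have hn3 : 3 ≤ Fintype.card V := hG.1
  have htail_len : p.support.tail.length = c := by
    have h1 := p.length_support
    have h2 : p.support = v0 :: p.support.tail := p.support_eq_cons
    rw [h2] at h1
    simpa [hcdef] using h1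
  have htail_ne : p.support.tail ≠ [] := by
    intro h
    rw [h] at htail_len
    simp at htail_len
    omega
  have hv0tail : v0 ∈ p.support.tail := end_mem_support_tail p htail_ne
  have hCs_card : Fintype.card ↥Cs = c := by
    rw [← Set.toFinset_card]
    have h1 : Cs.toFinset = p.support.tail.toFinset := by
      ext z
      simp only [Set.mem_toFinset, hCsdef, Set.mem_setOf_eq, List.mem_toFinset]
      rw [p.mem_support_iff]
      constructor
      · rintro (rfl | h)
        exacts [hv0tail, h]
      · intro h
        exact Or.inr h
    rw [h1, List.toFinset_card_of_nodup hcyc.support_nodup, htail_len]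
  have hdescend : HamConn (G.induce Cs) :=
    hamConn_descend (le_of_eq hCs_card) hrel hHam
  obtain ⟨w, hw⟩ : ∃ w, w ∉ Cs := by
    by_contra hcon
    push_neg at hcon
    have huniv : Cs = Set.univ := Set.eq_univ_of_forall hcon
    have hcard : Fintype.card ↥Cs = Fintype.card V :=
      Fintype.card_of_bijective (f := (Subtype.val : ↥Cs → V))
        ⟨Subtype.val_injective, fun z => ⟨⟨z, hcon z⟩, rfl⟩⟩
    omega
  have hv0Cs : v0 ∈ Cs := p.start_mem_support
  obtain ⟨Q0⟩ := preconnected_of_twoConnected hG w v0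
  obtain ⟨x, hxCs, Rx0, hRx0⟩ := exists_first_hit Cs Q0 hw hv0Cs
  have hRx_prop : ∀ z ∈ (Rx0.toPath : G.Walk w x).support, z ∈ Cs → z = x :=
    fun z hz => hRx0 z (Rx0.support_toPath_subset hz)
  have hwx : w ≠ x := fun h => hw (h ▸ hxCs)
  obtain ⟨⟨x', hx'Cs⟩, hx'ne⟩ :=
    Fintype.exists_ne_of_one_lt_card (by omega : 1 < Fintype.card ↥Cs) ⟨x, hxCs⟩
  have hx'nex : x' ≠ x := fun h => hx'ne (Subtype.ext h)
  have hmem2 : ∀ z : V, z ≠ x → z ∈ ((⊤ : G.Subgraph).deleteVerts {x}).verts := by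
    intro z hz
    simp only [SimpleGraph.Subgraph.deleteVerts_verts, SimpleGraph.Subgraph.verts_top,
      Set.mem_diff, Set.mem_univ, Set.mem_singleton_iff, true_and]
    exact hz
  obtain ⟨Q2⟩ := (hG.2 x).preconnected ⟨w, hmem2 w hwx⟩ ⟨x', hmem2 x' hx'nex⟩
  obtain ⟨y2, hy2, R2, hR2⟩ := exists_first_hit
    {z : ↥(((⊤ : G.Subgraph).deleteVerts {x}).verts) | z.val ∈ Cs} Q2
    (by simpa using hw) (by simpa using hx'Cs)
  have hyCs : (y2 : V) ∈ Cs := hy2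
  have hynex : (y2 : V) ≠ x := by
    have h := y2.2
    simp only [SimpleGraph.Subgraph.deleteVerts_verts, SimpleGraph.Subgraph.verts_top,
      Set.mem_diff, Set.mem_univ, Set.mem_singleton_iff, true_and] at h
    exact h
  have hRy0_prop : ∀ z ∈ (R2.map (SimpleGraph.Subgraph.hom _)).support, z ∈ Cs → z = (y2 : V) := by
    intro z hz hzc
    rw [SimpleGraph.Walk.support_map] at hz
    obtain ⟨z2, hz2, rfl⟩ := List.mem_map.1 hz
    exact congrArg Subtype.val (hR2 z2 hz2 hzc)
  set Ry0 : G.Walk w (y2 : V) := R2.map (SimpleGraph.Subgraph.hom _) with hRy0def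
  have hRy_prop : ∀ z ∈ (Ry0.toPath : G.Walk w (y2 : V)).support, z ∈ Cs → z = (y2 : V) :=
    fun z hz => hRy0_prop z (Ry0.support_toPath_subset hz)
  set W0 := (Rx0.toPath : G.Walk w x).reverse.append (Ry0.toPath : G.Walk w (y2 : V))
    with hW0def
  have hW0_prop : ∀ z ∈ W0.support, z ∈ Cs → z = x ∨ z = (y2 : V) := by
    intro z hz hzc
    rw [hW0def, SimpleGraph.Walk.support_append] at hz
    rcases List.mem_append.1 hz with h' | h'
    · rw [SimpleGraph.Walk.support_reverse] at h'
      exact Or.inl (hRx_prop z (List.mem_reverse.1 h') hzc)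
    · exact Or.inr (hRy_prop z (List.mem_of_mem_tail h') hzc)
  have hW0_edges : ∀ e ∈ W0.edges, ∃ a ∈ e, a ∉ Cs := by
    intro e he
    rw [hW0def, SimpleGraph.Walk.edges_append] at he
    rcases List.mem_append.1 he with h' | h'
    · refine edges_out (x0 := x) (Rx0.toPath : G.Walk w x).reverse ?_ e h'
      intro z hz hzc
      rw [SimpleGraph.Walk.support_reverse] at hz
      exact hRx_prop z (List.mem_reverse.1 hz) hzc
    · exact edges_out (Ry0.toPath : G.Walk w (y2 : V)) hRy_prop e h'
  set Qw := (W0.toPath : G.Walk x (y2 : V)) with hQdef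
  have hQ_path : Qw.IsPath := W0.toPath.2
  have hQ_prop : ∀ z ∈ Qw.support, z ∈ Cs → z = x ∨ z = (y2 : V) :=
    fun z hz => hW0_prop z (W0.support_toPath_subset hz)
  have hQ_edges : ∀ e ∈ Qw.edges, ∃ a ∈ e, a ∉ Cs :=
    fun e he => hW0_edges e (W0.edges_toPath_subset he)
  have hxy : x ≠ (y2 : V) := Ne.symm hynex
  have hQ_len : 2 ≤ Qw.length :=
    two_le_length_of_edges_out Qw hxy hxCs hyCs hQ_edges
  have hsub_ne : (⟨(y2 : V), hyCs⟩ : ↥Cs) ≠ ⟨x, hxCs⟩ :=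
    fun h => hynex (congrArg Subtype.val h)
  obtain ⟨Pham, hPham⟩ := hdescend ⟨(y2 : V), hyCs⟩ ⟨x, hxCs⟩ hsub_ne
  have hPham_nodup : Pham.support.Nodup :=
    hPham.isPath.support_nodup
  have hPham_path : Pham.IsPath := by
    constructor
    · constructor
      · exact (SimpleGraph.Walk.isPath_def _).2 hPham_nodup |>.edges_nodup
    · exact hPham_nodup
  set Pmap : G.Walk (y2 : V) x := Pham.map (inducedHom G Cs) with hPmapdef
  have hinj : Function.Injective (inducedHom G Cs) := Subtype.val_injective
  have hPmap_path : Pmap.IsPath := SimpleGraph.Walk.map_isPath_of_injective hinj hPham_path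
  have hPmap_supp : Pmap.support = Pham.support.map Subtype.val :=
    SimpleGraph.Walk.support_map _ _
  have hPmap_in : ∀ z ∈ Pmap.support, z ∈ Cs := by
    intro z hz
    rw [hPmap_supp] at hz
    obtain ⟨z2, -, rfl⟩ := List.mem_map.1 hz
    exact z2.2
  have hPmap_len : Pmap.length = c - 1 := by
    exact (SimpleGraph.Walk.length_map _ Pham).trans (by rw [hPham.length_eq, hCs_card])
  set Cyc := Qw.append Pmap with hCycdef
  have hCyc_len : Cyc.length = Qw.length + (c - 1) := by
    rw [hCycdef, SimpleGraph.Walk.length_append, hPmap_len]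
  have hlen_gt : c < Cyc.length := by omega
  have hQ_edges_nodup : Qw.edges.Nodup := hQ_path.isTrail.edges_nodup
  have hPmap_edges_nodup : Pmap.edges.Nodup := hPmap_path.isTrail.edges_nodup
  have hedge_disj : Qw.edges.Disjoint Pmap.edges := by
    intro e he he'
    obtain ⟨a, ha, hout⟩ := hQ_edges e he
    induction e with
    | h a' b' =>
        rcases Sym2.mem_iff.1 ha with rfl | rfl
        · exact hout (hPmap_in a (Pmap.fst_mem_support_of_mem_edges he'))
        · exact hout (hPmap_in a (Pmap.snd_mem_support_of_mem_edges he'))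
  have hCyc_trail : Cyc.IsTrail := by
    constructor
    rw [hCycdef, SimpleGraph.Walk.edges_append]
    exact hQ_edges_nodup.append hPmap_edges_nodup hedge_disj
  have hCyc_ne_nil : Cyc ≠ SimpleGraph.Walk.nil := by
    intro h
    have h0 : Cyc.length = 0 := by rw [h]; rfl
    omega
  have hCyc_tail_nodup : Cyc.support.tail.Nodup := by
    have h1 : Cyc.support = Qw.support ++ Pmap.support.tail := SimpleGraph.Walk.support_append _ _
    have h2 : Cyc.support.tail = Qw.support.tail ++ Pmap.support.tail := by
      rw [h1, List.tail_append_of_ne_nil Qw.support_ne_nil]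
    rw [h2]
    refine List.Nodup.append ?_ ?_ ?_
    · exact (List.tail_sublist _).nodup hQ_path.support_nodup
    · exact (List.tail_sublist _).nodup hPmap_path.support_nodup
    · intro z hz hz'
      have hzc : z ∈ Cs := hPmap_in z (List.mem_of_mem_tail hz')
      rcases hQ_prop z (List.mem_of_mem_tail hz) hzc with rfl | rfl
      · have hnd := hQ_path.support_nodup
        rw [Qw.support_eq_cons] at hnd
        exact (List.nodup_cons.1 hnd).1 hz
      · have hnd := hPmap_path.support_nodup
        rw [Pmap.support_eq_cons] at hnd
        exact (List.nodup_cons.1 hnd).1 hz'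
  have hCyc_cycle : Cyc.IsCycle := ⟨⟨hCyc_trail, hCyc_ne_nil⟩, hCyc_tail_nodup⟩
  have hcross : crossCount Cs Cyc.edges ≤ 2 := by
    have he : Cyc.edges = Qw.edges ++ Pmap.edges := SimpleGraph.Walk.edges_append _ _
    rw [he, crossCount, List.countP_append]
    have h1 : crossCount Cs Qw.edges ≤ 2 :=
      crossCount_le_two Qw hQ_path.support_nodup hQ_prop
    have h2 : List.countP (fun e => decide (crossEdge Cs e)) Pmap.edges = 0 := by
      rw [List.countP_eq_zero]
      intro e he'
      simp only [decide_eq_true_eq]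
      induction e with
      | h a' b' =>
          exact not_crossEdge_of_both_in
            (hPmap_in a' (Pmap.fst_mem_support_of_mem_edges he'))
            (hPmap_in b' (Pmap.snd_mem_support_of_mem_edges he'))
    rw [crossCount] at h1
    omega
  exact hmax x Cyc hCyc_cycle ⟨hlen_gt, hcross⟩
end
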